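/- arXiv:2210.05269 — 2 statements merged into one kernel-verified Lean document; each statement's English description precedes it below -/
import Mathlib

section
/- If m is the ploidy profile (n, n-1, n-2, ..., 1) with n >= 3, then for any ploidy profile m' obtained from m by removing at most one of its components, there exists a core network for m' that admits an HGT-consistent labelling. -/
/-!
Formalization preamble for "Autopolyploidy, allopolyploidy, and phylogenetic
networks with horizontal arcs" (Huber & Maher).

Networks are finite directed multigraphs whose vertices and arcs are (finitely
many) natural numbers; parallel arcs (beads) are allowed, loops are not.
-/

namespace Ploidy

/-- A finite directed multigraph: both vertex names and arc identifiers are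
natural numbers; `src`/`tgt` give the endpoints of each arc. -/
structure Net where
  verts : Finset ℕ
  arcs : Finset ℕ
  src : ℕ → ℕ
  tgt : ℕ → ℕ

/-- The indegree of a vertex. -/
def inDeg (G : Net) (v : ℕ) : ℕ := (G.arcs.filter fun a => G.tgt a = v).card

/-- The outdegree of a vertex. -/
def outDeg (G : Net) (v : ℕ) : ℕ := (G.arcs.filter fun a => G.src a = v).card

def IsLeafN (G : Net) (v : ℕ) : Prop := v ∈ G.verts ∧ inDeg G v = 1 ∧ outDeg G v = 0
def IsTreeVert (G : Net) (v : ℕ) : Prop := v ∈ G.verts ∧ inDeg G v = 1 ∧ outDeg G v = 2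
def IsReticN (G : Net) (v : ℕ) : Prop := v ∈ G.verts ∧ inDeg G v = 2 ∧ outDeg G v = 1
def IsRootN (G : Net) (v : ℕ) : Prop := v ∈ G.verts ∧ inDeg G v = 0

instance (G : Net) (v : ℕ) : Decidable (IsLeafN G v) :=
  decidable_of_iff (v ∈ G.verts ∧ inDeg G v = 1 ∧ outDeg G v = 0) Iff.rfl

/-- `IsWalk G l u v`: the list of arcs `l` forms a directed walk from `u` to `v`. -/
def IsWalk (G : Net) : List ℕ → ℕ → ℕ → Prop
  | [], u, v => u = v ∧ u ∈ G.verts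
  | a :: l, u, v => a ∈ G.arcs ∧ G.src a = u ∧ IsWalk G l (G.tgt a) v

/-- The number of directed paths from `u` to `v` (in a DAG every directed walk is
a path, and there are finitely many of them). -/
noncomputable def nPaths (G : Net) (u v : ℕ) : ℕ := Set.ncard {l : List ℕ | IsWalk G l u v}

/-- `a` is an arc from `u` to `v`. -/
def ArcFT (G : Net) (a u v : ℕ) : Prop := a ∈ G.arcs ∧ G.src a = u ∧ G.tgt a = v

/-- `u` is a parent of `v`. -/
def IsParent (G : Net) (u v : ℕ) : Prop := ∃ a, ArcFT G a u v

/-- `w` is below `u` (reachable from `u` by a directed walk, possibly `u = w`). -/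
def BelowV (G : Net) (u w : ℕ) : Prop := ∃ l, IsWalk G l u w

/-- `v` is an end vertex of a pair of parallel arcs (a bead). -/
def InBead (G : Net) (v : ℕ) : Prop :=
  ∃ a b, a ∈ G.arcs ∧ b ∈ G.arcs ∧ a ≠ b ∧ G.src a = G.src b ∧ G.tgt a = G.tgt b ∧
    (G.src a = v ∨ G.tgt a = v)

/-- `G` is beadless: there is no pair of parallel arcs. -/
def Beadless (G : Net) : Prop := ∀ v, ¬ InBead G v

/-- `G` is a (rooted, binary) phylogenetic network in the sense of Huber–Maher:
a rooted DAG, possibly with beads but without loops, with a unique root of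
indegree 0 and outdegree 2, all of whose other vertices are leaves, tree
vertices or reticulation vertices. -/
structure IsPhylo (G : Net) : Prop where
  src_mem : ∀ a ∈ G.arcs, G.src a ∈ G.verts
  tgt_mem : ∀ a ∈ G.arcs, G.tgt a ∈ G.verts
  no_loop : ∀ a ∈ G.arcs, G.src a ≠ G.tgt a
  acyclic : ∀ (v : ℕ) (l : List ℕ), l ≠ [] → ¬ IsWalk G l v v
  root_exu : ∃! r, IsRootN G r
  root_out : ∀ r, IsRootN G r → outDeg G r = 2
  types : ∀ v ∈ G.verts, IsRootN G v ∨ IsLeafN G v ∨ IsTreeVert G v ∨ IsReticN G v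

/-- An HGT-consistent labelling: (P1), (P2) and (P3) (the latter required only for
reticulation vertices not contained in beads). -/
def IsHGT (G : Net) (t : ℕ → ℝ) : Prop :=
  (∀ v ∈ G.verts, 0 ≤ t v) ∧
  (∀ a ∈ G.arcs,
      (IsReticN G (G.tgt a) → t (G.src a) ≤ t (G.tgt a)) ∧
      (¬ IsReticN G (G.tgt a) → t (G.src a) < t (G.tgt a))) ∧
  (∀ u ∈ G.verts, ¬ IsLeafN G u → ∃ v, IsParent G u v ∧ t u < t v) ∧
  (∀ v, IsReticN G v → ¬ InBead G v → ∃! u, IsParent G u v ∧ t u = t v)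

/-- `v` is a reticulation vertex (not contained in a bead) violating (P3). -/
def ViolatesP3 (G : Net) (t : ℕ → ℝ) (v : ℕ) : Prop :=
  IsReticN G v ∧ ¬ InBead G v ∧ ¬ (∃! u, IsParent G u v ∧ t u = t v)

/-- A weak HGT-consistent labelling: (P1), (P2) and (P3'): at most one reticulation
vertex `v`, with distinct parents `u₁, u₂` such that `u₂` is below `u₁` and
`t u₁ ≠ t v ≠ t u₂`, violates (P3). -/
def IsWeakHGT (G : Net) (t : ℕ → ℝ) : Prop :=
  (∀ v ∈ G.verts, 0 ≤ t v) ∧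
  (∀ a ∈ G.arcs,
      (IsReticN G (G.tgt a) → t (G.src a) ≤ t (G.tgt a)) ∧
      (¬ IsReticN G (G.tgt a) → t (G.src a) < t (G.tgt a))) ∧
  (∀ u ∈ G.verts, ¬ IsLeafN G u → ∃ v, IsParent G u v ∧ t u < t v) ∧
  (∀ v w, ViolatesP3 G t v → ViolatesP3 G t w → v = w) ∧
  (∀ v, ViolatesP3 G t v →
      ∃ u1 u2, u1 ≠ u2 ∧ IsParent G u1 v ∧ IsParent G u2 v ∧ BelowV G u1 u2 ∧
        t u1 ≠ t v ∧ t u2 ≠ t v)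

/-! ### Ploidy profiles and the simplification sequence -/

/-- A ploidy profile: a nonempty descending list of positive integers; the entry at
(0-based) position `i` is indexed by the taxon `x_{i+1}`. -/
def IsProfileL (l : List ℕ) : Prop := l ≠ [] ∧ l.Pairwise (· ≥ ·) ∧ ∀ x ∈ l, 1 ≤ x

/-- A simple ploidy profile: first component at least 2, all other components 1. -/
def IsSimpleP (l : List ℕ) : Prop := l ≠ [] ∧ 2 ≤ l.headI ∧ ∀ x ∈ l.tail, x = 1

/-- A strictly simple ploidy profile. -/
def IsStrictlySimpleP (l : List ℕ) : Prop := IsSimpleP l ∧ l.length = 1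

/-- Insert `x` into a descending list, directly after the last occurrence of the
value `x` (i.e. after all entries `≥ x`). -/
def insertDesc (x : ℕ) : List ℕ → List ℕ
  | [] => [x]
  | y :: ys => if x ≤ y then y :: insertDesc x ys else x :: y :: ys

/-- One step of the simplification process for ploidy profiles; simple profiles are
fixed points.  With `α = m₁ - m₂`: if `α = 0` delete `m₁`; if `α > m₂` replace `m₁`
by `α`; if `0 < α ≤ m₂` delete `m₁` and insert `α` directly after the last
occurrence of the value `α`. -/
def simpStep (l : List ℕ) : List ℕ :=
  if 2 ≤ l.headI ∧ ∀ x ∈ l.tail, x = 1 then l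
  else
    match l with
    | m1 :: m2 :: rest =>
        if m1 = m2 then m2 :: rest
        else if m2 < m1 - m2 then (m1 - m2) :: m2 :: rest
        else insertDesc (m1 - m2) (m2 :: rest)
    | _ => l

/-- `mt` is the (simple) terminal element of the simplification sequence of `m`. -/
def IsTerminal (m mt : List ℕ) : Prop := IsSimpleP mt ∧ ∃ k, simpStep^[k] m = mt

/-- A practical ploidy profile: simple but not strictly simple, or `(2^l)`, `l ≥ 1`. -/
def Practical (l : List ℕ) : Prop :=
  (IsSimpleP l ∧ 2 ≤ l.length) ∨ (l.length = 1 ∧ ∃ j, 1 ≤ j ∧ l.headI = 2 ^ j)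

/-- An arc-rich (strictly simple) ploidy profile: the binary representation of its
single component has dimension at least two. -/
def ArcRich (l : List ℕ) : Prop :=
  l.length = 1 ∧ 2 ≤ l.headI ∧ 2 ≤ (Nat.bits l.headI).count true

/-! ### Realizations of ploidy profiles -/

/-- A network together with an indexing of its leaves by the positions of a
ploidy profile. -/
structure LNet where
  net : Net
  leaf : ℕ → ℕ

/-- `R` is a phylogenetic network realizing the ploidy profile `m`: the leaves of
`R.net` are bijectively indexed by the positions of `m` and, for every `i`, the
number of directed paths from the root to the leaf `R.leaf i` is the `i`-th
component of `m`. -/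
def RealizesL (R : LNet) (m : List ℕ) : Prop :=
  IsPhylo R.net ∧
  (∀ i < m.length, IsLeafN R.net (R.leaf i)) ∧
  (∀ i j, i < m.length → j < m.length → R.leaf i = R.leaf j → i = j) ∧
  (∀ v, IsLeafN R.net v → ∃ i < m.length, R.leaf i = v) ∧
  (∀ i < m.length, ∀ r, IsRootN R.net r → nPaths R.net r (R.leaf i) = m.getD i 0)

/-! ### Concrete constructions: bead chains and the core network `B(m)` -/

/-- Build a network from a list of arcs (as (source, target) pairs); arc
identifiers are positions in the list, so repeated pairs yield beads. -/
def mkNet (l : List (ℕ × ℕ)) : Net where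
  verts := (l.map Prod.fst ++ l.map Prod.snd).toFinset
  arcs := Finset.range l.length
  src := fun i => (l.getD i (0, 0)).1
  tgt := fun i => (l.getD i (0, 0)).2

/-- The chain `B(l)` of `l` beads with a pendant leaf: vertex `2*j` is the tree
vertex of the `(j+1)`-st bead, `2*j+1` its reticulation vertex `h_{j+1}`, there is
an arc from `h_j` to the tree vertex of the next bead, and `2*l` is the pendant
leaf `x₁` attached by the arc `(h_l, x₁)`. -/
def beadChain (l : ℕ) : Net :=
  mkNet ((List.range l).flatMap fun j => [(2*j, 2*j+1), (2*j, 2*j+1), (2*j+1, 2*j+2)])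

/-- The decreasing list `(i₁, …, i_k)` of exponents of the binary representation
of `m₁`. -/
def expList (m1 : ℕ) : List ℕ :=
  ((List.range (m1+1)).filter fun j => m1.testBit j).reverse

/-- First vertex code available for the leaves `x_2, …, x_n` in `BNet`. -/
def xBase (m1 : ℕ) : ℕ := 2 * (expList m1).headI + 2 * (expList m1).length + 10

/-- The arcs of the core network `B(m)` for the simple profile `(m₁, 1, …, 1)` on
`n` taxa: a chain of `i₁` beads with pendant leaf `x₁ = 0` (root is the vertex
`2`), one root arc subdivided by `s_k` and, for `2 ≤ j ≤ k`, an arc `(s_j, s_j')`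
where `s_j'` subdivides the outgoing arc of the reticulation vertex having exactly
`i_j` reticulation vertices strictly below it and `s_2, …, s_{k-1}` subdivide the
arc `(s_k, s_k')`; if `n ≥ 2` a caterpillar tree on the leaves `x_2, …, x_n`
(codes `xBase m₁ + i`) is attached via a subdivision vertex `w` (placed on a root
arc if `k = 1`, on `(s_k, s_k')` if `k = 2`, and on `(s_{k-1}, s_k')` if `k ≥ 3`). -/
def BArcs (m1 n : ℕ) : List (ℕ × ℕ) :=
  let E := expList m1
  let k := E.length
  let i1 := E.headI
  let hv : ℕ → ℕ := fun j => 2*j + 1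
  let tv : ℕ → ℕ := fun j => 2*j
  let nxt : ℕ → ℕ := fun j => if j = i1 then 0 else 2*j + 2
  let S' : ℕ → ℕ := fun j => 2*i1 + 2 + j
  let P : ℕ → ℕ := fun j => 2*i1 + k + 2 + j
  let w : ℕ := 2*i1 + 2*k + 4
  let L : ℕ := 2*i1 + 2*k + 10
  let x : ℕ → ℕ := fun i => L + i
  let cv : ℕ → ℕ := fun i => L + n + i
  let r : ℕ → ℕ := fun t => i1 - E.getD (t-1) 0
  let rootArcs : List (ℕ × ℕ) :=
    if 2 ≤ k then [(tv 1, hv 1), (tv 1, P k), (P k, hv 1)]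
    else if 2 ≤ n then [(tv 1, hv 1), (tv 1, w), (w, hv 1)]
    else [(tv 1, hv 1), (tv 1, hv 1)]
  let otherBeads : List (ℕ × ℕ) :=
    (List.range' 2 (i1 - 1)).flatMap fun j => [(tv j, hv j), (tv j, hv j)]
  let chainArcs : List (ℕ × ℕ) :=
    (List.range' 1 i1).flatMap fun j =>
      match (List.range' 2 (k-1)).find? (fun t => r t == j) with
      | some t => [(hv j, S' t), (S' t, nxt j)]
      | none => [(hv j, nxt j)]
  let sChain : List ℕ :=
    [P k] ++ (List.range' 2 (k-2)).map P ++ (if 2 ≤ n then [w] else []) ++ [S' k]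
  let sArcs : List (ℕ × ℕ) :=
    if 2 ≤ k then (sChain.zip sChain.tail) ++ (List.range' 2 (k-2)).map (fun j => (P j, S' j))
    else []
  let catArcs : List (ℕ × ℕ) :=
    if n ≤ 1 then []
    else if n = 2 then [(w, x 2)]
    else [(w, cv 2)] ++
      ((List.range' 2 (n-3)).flatMap fun i => [(cv i, x i), (cv i, cv (i+1))]) ++
      [(cv (n-1), x (n-1)), (cv (n-1), x n)]
  rootArcs ++ otherBeads ++ chainArcs ++ sArcs ++ catArcs

/-- The core network `B(m)` for a simple profile with first component `m1` on `n`
taxa. -/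
def BNet (m1 n : ℕ) : Net := mkNet (BArcs m1 n)

/-- The core network `B(m)` of a ploidy profile whose terminal element is `mt`,
together with its leaf indexing (leaf `0` is `x₁ = 0`, leaf `i` is `x_{i+1}`). -/
def BLNet (mt : List ℕ) : LNet where
  net := BNet mt.headI mt.length
  leaf := fun i => if i = 0 then 0 else xBase mt.headI + (i + 1)

/-- The naive realization of the simple profile `(m₁, 1, …, 1)` on `n` taxa: a
directed path `0, 1, …, n + 2m₁ - 3` (with `v_j = j - 1`, `w_i = m₁ + i - 3`,
`v_j' = n + 2m₁ - 3 - j` and `x₁ = n + 2m₁ - 3`) together with the arcs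
`(v_j, v_j')` and the pendant leaf arcs `(w_i, x_i)` with `x_i = n + 2m₁ + i`. -/
def naiveNet (m1 n : ℕ) : Net :=
  mkNet (((List.range (n + 2*m1 - 3)).map fun p => (p, p+1)) ++
    ((List.range' 1 (m1 - 1)).map fun j => (j - 1, n + 2*m1 - 3 - j)) ++
    ((List.range' 2 (n - 1)).map fun i => (m1 + i - 3, n + 2*m1 + i)))

/-! ### Cherry modification operations -/

/-- `reduce(a,b)`: delete the leaf `b` of the cherry `{a,b}` together with its
incoming arc and suppress the resulting degree-two vertex (collapsing the network
to the single vertex `a` when the common parent is the root). -/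
def ReduceOp (G G' : Net) : Prop :=
  ∃ a b p ea eb, a ≠ b ∧ IsLeafN G a ∧ IsLeafN G b ∧
    ArcFT G ea p a ∧ ArcFT G eb p b ∧ ea ≠ eb ∧
    G'.verts = (G.verts.erase b).erase p ∧
    G'.arcs = (G.arcs.erase eb).erase ea ∧
    ((IsRootN G p ∧ ∀ e ∈ G'.arcs, G'.src e = G.src e ∧ G'.tgt e = G.tgt e) ∨
     (∃ ep q, ArcFT G ep q p ∧
        (∀ e ∈ G'.arcs, e ≠ ep → G'.src e = G.src e ∧ G'.tgt e = G.tgt e) ∧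
        G'.src ep = q ∧ G'.tgt ep = a))

/-- `cut(a,b)`: delete the reticulation arc of the reticulate cherry `{a,b}` with
reticulation leaf `b`, suppressing the two resulting degree-two vertices. -/
def CutOp (G G' : Net) : Prop :=
  ∃ a b pa pb e1 e2 e3 e4 e5 q r,
    a ≠ b ∧ IsLeafN G a ∧ IsLeafN G b ∧ IsReticN G pb ∧
    ArcFT G e1 pa a ∧ ArcFT G e2 pb b ∧ ArcFT G e3 pa pb ∧
    ArcFT G e4 q pb ∧ e3 ≠ e4 ∧ ArcFT G e5 r pa ∧
    G'.verts = (G.verts.erase pa).erase pb ∧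
    G'.arcs = ((G.arcs.erase e3).erase e1).erase e2 ∧
    (∀ e ∈ G'.arcs, e ≠ e4 → e ≠ e5 → G'.src e = G.src e ∧ G'.tgt e = G.tgt e) ∧
    G'.src e5 = r ∧ G'.tgt e5 = a ∧
    G'.src e4 = q ∧ G'.tgt e4 = b

/-- `simp(a)`: for a type-1 degenerate cherry `{a}` (sole leaf whose parent is the
reticulation vertex of a bead), delete one arc of the bead, suppressing the
resulting degree-two vertex and collapsing the outgoing arc of the tree vertex of
the bead. -/
def SimpOp (G G' : Net) : Prop :=
  ∃ a h u e1 e2 e3,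
    IsLeafN G a ∧ (∀ w, IsLeafN G w → w = a) ∧ IsReticN G h ∧
    ArcFT G e1 u h ∧ ArcFT G e2 u h ∧ e1 ≠ e2 ∧ ArcFT G e3 h a ∧
    ((IsRootN G u ∧ G'.verts = {a} ∧ G'.arcs = ∅) ∨
     (∃ eu q, ArcFT G eu q u ∧
        G'.verts = (G.verts.erase h).erase u ∧
        G'.arcs = ((G.arcs.erase e2).erase e3).erase e1 ∧
        (∀ e ∈ G'.arcs, e ≠ eu → G'.src e = G.src e ∧ G'.tgt e = G.tgt e) ∧
        G'.src eu = q ∧ G'.tgt eu = a))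

/-- `trim(a)`: for a type-2 degenerate cherry `{a}` (sole leaf whose parent `p` is
a reticulation vertex with distinct parents `q₁, q₂`), delete the arc `(q₁,p)`
(case (a): there is a vertex `q` with arcs `(q,q₁)`, `(q,q₂)`, `(q₁,q₂)`),
respectively one of the two parallel arcs from `q` to `q₂` (case (b): there is an
arc `(q₁,q)` and a pair of parallel arcs from `q` to `q₂`), suppressing the two
resulting degree-two vertices. -/
def TrimOp (G G' : Net) : Prop :=
  ∃ a p g0, IsLeafN G a ∧ (∀ w, IsLeafN G w → w = a) ∧ IsReticN G p ∧ ArcFT G g0 p a ∧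
   ((∃ q q1 q2 f1 f2 f3 g1 g2,
      ArcFT G g1 q1 p ∧ ArcFT G g2 q2 p ∧ g1 ≠ g2 ∧ q1 ≠ q2 ∧
      ArcFT G f1 q q1 ∧ ArcFT G f2 q q2 ∧ ArcFT G f3 q1 q2 ∧
      G'.verts = (G.verts.erase q1).erase p ∧
      G'.arcs = ((G.arcs.erase g1).erase f3).erase g0 ∧
      (∀ e ∈ G'.arcs, e ≠ f1 → e ≠ g2 → G'.src e = G.src e ∧ G'.tgt e = G.tgt e) ∧
      G'.src f1 = q ∧ G'.tgt f1 = q2 ∧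
      G'.src g2 = q2 ∧ G'.tgt g2 = a) ∨
    (∃ q q1 q2 eq' f1 f2 g1 g2,
      ArcFT G g1 q1 p ∧ ArcFT G g2 q2 p ∧ g1 ≠ g2 ∧ q1 ≠ q2 ∧
      ArcFT G eq' q1 q ∧ ArcFT G f1 q q2 ∧ ArcFT G f2 q q2 ∧ f1 ≠ f2 ∧
      G'.verts = (G.verts.erase q).erase q2 ∧
      G'.arcs = ((G.arcs.erase f2).erase f1).erase g2 ∧
      (∀ e ∈ G'.arcs, e ≠ eq' → G'.src e = G.src e ∧ G'.tgt e = G.tgt e) ∧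
      G'.src eq' = q1 ∧ G'.tgt eq' = p))

/-- A single cherry modification operation: reduce, cut or simp. -/
def CherryModOp (G G' : Net) : Prop := ReduceOp G G' ∨ CutOp G G' ∨ SimpOp G G'

/-- A single weak cherry modification operation: reduce, cut, simp or trim. -/
def WeakCherryModOp (G G' : Net) : Prop := CherryModOp G G' ∨ TrimOp G G'

/-- The network consisting of a single vertex (and no arcs). -/
def IsSingleV (G : Net) : Prop := ∃ v, G.verts = {v} ∧ G.arcs = ∅

/-- `G` admits a complete cherry modification sequence, i.e. `G` is an orchard. -/
def IsOrchardN (G : Net) : Prop :=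
  ∃ G', Relation.ReflTransGen CherryModOp G G' ∧ IsSingleV G'

/-- `G` admits a complete weak cherry modification sequence, i.e. `G` is a weak
orchard. -/
def IsWeakOrchardN (G : Net) : Prop :=
  ∃ G', Relation.ReflTransGen WeakCherryModOp G G' ∧ IsSingleV G'

/-! ### The traceback through the simplification sequence -/

/-- Traceback step in case `α = 0`: replace the leaf indexing the first component
of `m''` by a cherry on two new leaves. -/
def CherryExpandOp (R'' R' : LNet) : Prop :=
  ∃ y1 y2 b1 b2,
    y1 ∉ R''.net.verts ∧ y2 ∉ R''.net.verts ∧ y1 ≠ y2 ∧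
    b1 ∉ R''.net.arcs ∧ b2 ∉ R''.net.arcs ∧ b1 ≠ b2 ∧
    R'.net.verts = R''.net.verts ∪ {y1, y2} ∧
    R'.net.arcs = R''.net.arcs ∪ {b1, b2} ∧
    (∀ a ∈ R''.net.arcs, R'.net.src a = R''.net.src a ∧ R'.net.tgt a = R''.net.tgt a) ∧
    R'.net.src b1 = R''.leaf 0 ∧ R'.net.tgt b1 = y1 ∧
    R'.net.src b2 = R''.leaf 0 ∧ R'.net.tgt b2 = y2 ∧
    R'.leaf 0 = y1 ∧ R'.leaf 1 = y2 ∧ (∀ i, 1 ≤ i → R'.leaf (i + 1) = R''.leaf i)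

/-- Traceback step in case `α > m₂'`: subdivide the incoming arcs of the leaves
indexing the first and second components of `m''` by new vertices `u` and `v` and
add the arc `(v,u)`. -/
def AddArcOp (R'' R' : LNet) : Prop :=
  ∃ u v a0 a1 b0 b1 c,
    u ∉ R''.net.verts ∧ v ∉ R''.net.verts ∧ u ≠ v ∧
    a0 ∈ R''.net.arcs ∧ R''.net.tgt a0 = R''.leaf 0 ∧
    a1 ∈ R''.net.arcs ∧ R''.net.tgt a1 = R''.leaf 1 ∧ a0 ≠ a1 ∧
    b0 ∉ R''.net.arcs ∧ b1 ∉ R''.net.arcs ∧ c ∉ R''.net.arcs ∧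
    b0 ≠ b1 ∧ b0 ≠ c ∧ b1 ≠ c ∧
    R'.net.verts = R''.net.verts ∪ {u, v} ∧
    R'.net.arcs = R''.net.arcs ∪ {b0, b1, c} ∧
    (∀ a ∈ R''.net.arcs, a ≠ a0 → a ≠ a1 →
        R'.net.src a = R''.net.src a ∧ R'.net.tgt a = R''.net.tgt a) ∧
    R'.net.src a0 = R''.net.src a0 ∧ R'.net.tgt a0 = u ∧
    R'.net.src a1 = R''.net.src a1 ∧ R'.net.tgt a1 = v ∧
    R'.net.src b0 = u ∧ R'.net.tgt b0 = R''.leaf 0 ∧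
    R'.net.src b1 = v ∧ R'.net.tgt b1 = R''.leaf 1 ∧
    R'.net.src c = v ∧ R'.net.tgt c = u ∧
    (∀ i, R'.leaf i = R''.leaf i)

/-- Traceback step in case `0 < α ≤ m₂'`, where the inserted component `α` sits at
(0-based) position `j` of `m''`: subdivide the incoming arc of the leaf indexing
`α` by a vertex `v`, replace the leaf indexing the first component of `m''` by a
cherry, subdivide the incoming arc of one of the two new cherry leaves by a vertex
`u`, add the arc `(v,u)` and delete the leaf indexing `α` together with its
incoming arc, suppressing the resulting degree-two vertex. -/
def InsertBackOp (j : ℕ) (R'' R' : LNet) : Prop :=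
  ∃ u y1 y2 c1 c2 c3 az,
    u ∉ R''.net.verts ∧ y1 ∉ R''.net.verts ∧ y2 ∉ R''.net.verts ∧
    u ≠ y1 ∧ u ≠ y2 ∧ y1 ≠ y2 ∧
    c1 ∉ R''.net.arcs ∧ c2 ∉ R''.net.arcs ∧ c3 ∉ R''.net.arcs ∧
    c1 ≠ c2 ∧ c1 ≠ c3 ∧ c2 ≠ c3 ∧
    az ∈ R''.net.arcs ∧ R''.net.tgt az = R''.leaf j ∧
    R'.net.verts = (R''.net.verts.erase (R''.leaf j)) ∪ {u, y1, y2} ∧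
    R'.net.arcs = R''.net.arcs ∪ {c1, c2, c3} ∧
    (∀ a ∈ R''.net.arcs, a ≠ az →
        R'.net.src a = R''.net.src a ∧ R'.net.tgt a = R''.net.tgt a) ∧
    R'.net.src az = R''.net.src az ∧ R'.net.tgt az = u ∧
    R'.net.src c1 = R''.leaf 0 ∧ R'.net.tgt c1 = u ∧
    R'.net.src c2 = u ∧ R'.net.tgt c2 = y1 ∧
    R'.net.src c3 = R''.leaf 0 ∧ R'.net.tgt c3 = y2 ∧
    R'.leaf 0 = y1 ∧ R'.leaf 1 = y2 ∧
    (∀ i, 1 ≤ i → i < j → R'.leaf (i + 1) = R''.leaf i) ∧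
    (∀ i, j < i → R'.leaf i = R''.leaf i)

/-- One step of the traceback: `R'` is a realization of the non-simple profile `m'`
obtained from the realization `R''` of `simpStep m'` by the surgery dictated by the
case (`α = 0`, `α > m₂'` or `0 < α ≤ m₂'`) that produced `simpStep m'` from `m'`. -/
def TraceStep (m' : List ℕ) (R'' R' : LNet) : Prop :=
  2 ≤ m'.length ∧ ¬ IsSimpleP m' ∧
  ((m'.headI = m'.tail.headI ∧ CherryExpandOp R'' R') ∨
   (m'.tail.headI < m'.headI - m'.tail.headI ∧ AddArcOp R'' R') ∨
   (0 < m'.headI - m'.tail.headI ∧ m'.headI - m'.tail.headI ≤ m'.tail.headI ∧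
     InsertBackOp
       ((m'.tail.takeWhile fun y => decide (m'.headI - m'.tail.headI ≤ y)).length)
       R'' R'))

/-- `TracebackFrom core m N`: `N` is a network `N(m)` obtainable by the traceback
through the simplification sequence of `m`, initialized with the core network
`core`. -/
inductive TracebackFrom (core : LNet) : List ℕ → LNet → Prop
  | base (m : List ℕ) : IsSimpleP m → TracebackFrom core m core
  | step (m' : List ℕ) (R'' R' : LNet) :
      TracebackFrom core (simpStep m') R'' → TraceStep m' R'' R' →
      TracebackFrom core m' R'

/-! ### Tree-based and tree-child networks -/

def subIn (G : Net) (A : Finset ℕ) (v : ℕ) : ℕ := (A.filter fun a => G.tgt a = v).card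
def subOut (G : Net) (A : Finset ℕ) (v : ℕ) : ℕ := (A.filter fun a => G.src a = v).card

/-- `G` is tree-based: some subset `A` of its arcs forms a spanning subdivision of a
rooted phylogenetic tree (with one extra incoming arc added to its root) whose
leaves are exactly the leaves of `G`; all remaining arcs of `G` join subdivision
vertices, and every subdivision vertex has total degree 3 in `G`. -/
def IsTreeBased (G : Net) : Prop :=
  ∃ A : Finset ℕ, A ⊆ G.arcs ∧
    (∃! r, r ∈ G.verts ∧ subIn G A r = 0) ∧
    (∀ r ∈ G.verts, subIn G A r = 0 → subOut G A r = 1) ∧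
    (∀ v ∈ G.verts,
        (subIn G A v = 0 ∧ subOut G A v = 1) ∨ (subIn G A v = 1 ∧ subOut G A v = 0) ∨
        (subIn G A v = 1 ∧ subOut G A v = 1) ∨ (subIn G A v = 1 ∧ subOut G A v = 2)) ∧
    (∀ v ∈ G.verts, subIn G A v = 1 → subOut G A v = 0 → IsLeafN G v) ∧
    (∀ v, IsLeafN G v → subIn G A v = 1 ∧ subOut G A v = 0) ∧
    (∀ a ∈ G.arcs, a ∉ A →
        subIn G A (G.src a) = 1 ∧ subOut G A (G.src a) = 1 ∧
        subIn G A (G.tgt a) = 1 ∧ subOut G A (G.tgt a) = 1) ∧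
    (∀ v ∈ G.verts, subIn G A v = 1 → subOut G A v = 1 → inDeg G v + outDeg G v = 3)

/-- `G` is tree-child (reticulation vertices contained in beads being ignored):
every vertex has a directed path to a leaf on which every vertex except possibly
the first one is either not a reticulation vertex or is contained in a bead. -/
def IsTreeChild (G : Net) : Prop :=
  ∀ v ∈ G.verts, ∃ (l : List ℕ) (w : ℕ), IsWalk G l v w ∧ IsLeafN G w ∧
    ∀ a ∈ l, IsReticN G (G.tgt a) → InBead G (G.tgt a)

/-! ### Multiple-labelled networks and the split operation -/

/-- A multiple-labelled network: a network together with a labelling map assigning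
to each leaf vertex the (0-based) position of the profile component it is labelled
with; distinct leaves may carry the same label. -/
structure MLNet where
  net : Net
  lab : ℕ → ℕ

/-- A multiple-labelled tree: a multiple-labelled network without reticulation
vertices. -/
def IsMLTree (R : MLNet) : Prop := ∀ v, ¬ IsReticN R.net v

/-- The multiple-labelled network `R` realizes the ploidy profile `m`: for every
position `i` of `m`, the total number of directed paths from the root to leaves
labelled `i` equals the `i`-th component of `m`. -/
def MLRealizes (R : MLNet) (m : List ℕ) : Prop :=
  IsPhylo R.net ∧
  (∀ v, IsLeafN R.net v → R.lab v < m.length) ∧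
  (∀ i < m.length, ∀ r, IsRootN R.net r →
      (∑ v ∈ R.net.verts.filter (fun v => IsLeafN R.net v ∧ R.lab v = i),
          nPaths R.net r v) = m.getD i 0)

/-- The arcs of the subgraph induced by the vertices below `c`. -/
def arcsBelow (G : Net) (c : ℕ) : Set ℕ :=
  {b | b ∈ G.arcs ∧ BelowV G c (G.src b) ∧ BelowV G c (G.tgt b)}

/-- `a` is a cut-arc of `G`: removing it disconnects its end vertices in the
underlying undirected graph. -/
def IsCutArc (G : Net) (a : ℕ) : Prop :=
  a ∈ G.arcs ∧
    ¬ Relation.ReflTransGen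
        (fun x y => ∃ b ∈ G.arcs, b ≠ a ∧
          ((G.src b = x ∧ G.tgt b = y) ∨ (G.src b = y ∧ G.tgt b = x)))
        (G.src a) (G.tgt a)

/-- The split operation: `R'` is obtained from `R` by deleting a reticulation
vertex `h` (with parents `p₁, p₂` and child `c`, where `(h,c)` is a cut-arc)
together with its three incident arcs, making a disjoint copy (via `φ` on vertices
and `ψ` on arcs) of the subgraph induced by the vertices below `c`, and attaching
one copy of `c` to `p₁` by an arc `(p₁,c)` and the other to `p₂` by an arc
`(p₂,c)`. -/
def SplitRel (R R' : MLNet) : Prop :=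
  ∃ (h p1 p2 c a0 a1 a2 : ℕ) (φ ψ : ℕ → ℕ),
    IsReticN R.net h ∧
    ArcFT R.net a0 h c ∧ IsCutArc R.net a0 ∧
    ArcFT R.net a1 p1 h ∧ ArcFT R.net a2 p2 h ∧
    a1 ≠ a2 ∧ a0 ≠ a1 ∧ a0 ≠ a2 ∧
    Set.InjOn φ {w | BelowV R.net c w} ∧
    (∀ w, BelowV R.net c w → φ w ∉ R.net.verts) ∧
    Set.InjOn ψ (arcsBelow R.net c) ∧
    (∀ b ∈ arcsBelow R.net c, ψ b ∉ R.net.arcs) ∧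
    (↑R'.net.verts : Set ℕ) =
      ((↑R.net.verts : Set ℕ) \ {h}) ∪ (φ '' {w | BelowV R.net c w}) ∧
    (↑R'.net.arcs : Set ℕ) =
      ((↑R.net.arcs : Set ℕ) \ {a0}) ∪ (ψ '' arcsBelow R.net c) ∧
    (∀ b ∈ R.net.arcs, b ≠ a0 → b ≠ a1 → b ≠ a2 →
        R'.net.src b = R.net.src b ∧ R'.net.tgt b = R.net.tgt b) ∧
    R'.net.src a1 = p1 ∧ R'.net.tgt a1 = c ∧
    R'.net.src a2 = p2 ∧ R'.net.tgt a2 = φ c ∧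
    (∀ b ∈ arcsBelow R.net c,
        R'.net.src (ψ b) = φ (R.net.src b) ∧ R'.net.tgt (ψ b) = φ (R.net.tgt b)) ∧
    (∀ v ∈ R.net.verts, v ≠ h → R'.lab v = R.lab v) ∧
    (∀ w, BelowV R.net c w → R'.lab (φ w) = R.lab w)

/-- Adjacency in ploidy profile space `𝒫(m)` (relative to an edit distance `D` on
multiple-labelled trees): both endpoints realize `m` and either one is obtained
from the other by a single split operation, or both are multiple-labelled trees at
`D`-distance 1. -/
def PEdge (m : List ℕ) (D : MLNet → MLNet → ℕ) (A B : MLNet) : Prop :=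
  MLRealizes A m ∧ MLRealizes B m ∧
    (SplitRel A B ∨ SplitRel B A ∨ (IsMLTree A ∧ IsMLTree B ∧ D A B = 1))


/-! ### Auxiliary development for Statement 2 -/

/-! Part 2 lemmas -/

def st : ℕ → List ℕ
  | 0 => []
  | k+1 => (k+2) :: st k

def seg : ℕ → ℕ → List ℕ
  | 0, _ => []
  | j+1, v => (v+j+1) :: seg j v

lemma mem_st {x k : ℕ} (h : x ∈ st k) : 2 ≤ x ∧ x ≤ k+1 := by
  induction k with
  | zero => simp [st] at h
  | succ k ih =>
    simp only [st, List.mem_cons] at h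
    rcases h with rfl | h
    · omega
    · have := ih h; omega

lemma mem_seg {x j v : ℕ} (h : x ∈ seg j v) : v+1 ≤ x ∧ x ≤ v+j := by
  induction j with
  | zero => simp [seg] at h
  | succ j ih =>
    simp only [seg, List.mem_cons] at h
    rcases h with rfl | h
    · omega
    · have := ih h; omega

lemma insertDesc_ge (x : ℕ) : ∀ l : List ℕ, (∀ y ∈ l, x ≤ y) → insertDesc x l = l ++ [x] := by
  intro l
  induction l with
  | nil => intro _; rfl
  | cons y ys ih =>
    intro h
    have hx : x ≤ y := h y (by simp)
    simp only [insertDesc, if_pos hx]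
    rw [ih (fun z hz => h z (by simp [hz]))]
    simp

lemma insertDesc_two_split (l r : List ℕ) (hl : ∀ y ∈ l, 2 ≤ y) (hr : ∀ y ∈ r, y < 2) :
    insertDesc 2 (l ++ r) = l ++ 2 :: r := by
  induction l with
  | nil =>
    cases r with
    | nil => rfl
    | cons y ys =>
      have : ¬ (2 ≤ y) := by have := hr y (by simp); omega
      simp [insertDesc, this]
  | cons y ys ih =>
    have hy : 2 ≤ y := hl y (by simp)
    show insertDesc 2 (y :: (ys ++ r)) = y :: (ys ++ 2 :: r)
    rw [show insertDesc 2 (y :: (ys ++ r))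
        = if 2 ≤ y then y :: insertDesc 2 (ys ++ r) else 2 :: y :: (ys ++ r) from rfl,
      if_pos hy, ih (fun z hz => hl z (by simp [hz]))]

lemma simpStep_eq (m1 m2 : ℕ) (rest : List ℕ) (hns : ¬(2 ≤ m1 ∧ ∀ x ∈ m2 :: rest, x = 1)) :
    simpStep (m1 :: m2 :: rest) =
      if m1 = m2 then m2 :: rest
      else if m2 < m1 - m2 then (m1 - m2) :: m2 :: rest
      else insertDesc (m1 - m2) (m2 :: rest) := by
  unfold simpStep
  rw [if_neg (by simpa using hns)]

lemma peel (v : ℕ) (rest : List ℕ) (hv : 2 ≤ v) (h1 : ∀ x ∈ rest, 1 ≤ x) :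
    simpStep ((v+1) :: v :: rest) = v :: (rest ++ [1]) := by
  rw [simpStep_eq]
  · rw [if_neg (by omega), if_neg (by omega)]
    have : v + 1 - v = 1 := by omega
    rw [this, insertDesc_ge 1 (v :: rest) (by intro y hy; rcases List.mem_cons.mp hy with rfl | hy; omega; exact h1 y hy)]
    simp
  · intro ⟨_, h⟩
    have := h v (by simp)
    omega

lemma lemA : ∀ k s : ℕ, simpStep^[k] (st (k+1) ++ List.replicate s 1) = 2 :: List.replicate (k+s) 1 := by
  intro k
  induction k with
  | zero => intro s; simp [st]
  | succ k ih =>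
    intro s
    have hst : st (k+2) ++ List.replicate s 1 = (k+3) :: (k+2) :: (st k ++ List.replicate s 1) := by
      simp [st]
    rw [Function.iterate_succ_apply, hst, peel (k+2) _ (by omega)
      (by intro x hx; rcases List.mem_append.mp hx with hx | hx
          · exact (mem_st hx).1.trans' (by omega)
          · simp_all [List.eq_of_mem_replicate hx])]
    rw [show ((k+2) : ℕ) :: ((st k ++ List.replicate s 1) ++ [1]) = st (k+1) ++ List.replicate (s+1) 1 by
      simp [st, List.replicate_succ']]
    rw [ih (s+1), show k + (s+1) = (k+1) + s by omega]

lemma lemB : ∀ (j v s : ℕ), 2 ≤ v →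
    simpStep^[j] (seg (j+1) v ++ (st (v-2) ++ List.replicate s 1)) =
      (v+1) :: (st (v-2) ++ List.replicate (s+j) 1) := by
  intro j
  induction j with
  | zero => intro v s hv; simp [seg]
  | succ j ih =>
    intro v s hv
    have hseg : seg (j+2) v ++ (st (v-2) ++ List.replicate s 1)
        = ((v+j+1)+1) :: (v+j+1) :: (seg j v ++ (st (v-2) ++ List.replicate s 1)) := by
      show (v+(j+1)+1) :: seg (j+1) v ++ _ = _
      rw [show v+(j+1)+1 = (v+j+1)+1 by omega]
      rfl
    rw [Function.iterate_succ_apply, hseg,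
      peel (v+j+1) _ (by omega)
      (by intro x hx
          rcases List.mem_append.mp hx with hx | hx
          · exact (mem_seg hx).1.trans' (by omega)
          · rcases List.mem_append.mp hx with hx | hx
            · exact (mem_st hx).1.trans' (by omega)
            · simp_all [List.eq_of_mem_replicate hx])]
    rw [show (v+j+1) :: ((seg j v ++ (st (v-2) ++ List.replicate s 1)) ++ [1])
        = seg (j+1) v ++ (st (v-2) ++ List.replicate (s+1) 1) by
      show _ = (v+j+1) :: (seg j v ++ (st (v-2) ++ List.replicate (s+1) 1))
      rw [List.replicate_succ']
      simp]
    rw [ih v (s+1) hv, show (s+1) + j = s + (j+1) by omega]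

lemma lemC : ∀ k s : ℕ, simpStep^[k] (st (k+1) ++ 2 :: List.replicate s 1)
    = 2 :: 2 :: List.replicate (s+k) 1 := by
  intro k
  induction k with
  | zero => intro s; simp [st]
  | succ k ih =>
    intro s
    have hst : st (k+2) ++ 2 :: List.replicate s 1
        = (k+3) :: (k+2) :: (st k ++ 2 :: List.replicate s 1) := by simp [st]
    rw [Function.iterate_succ_apply, hst, peel (k+2) _ (by omega)
      (by intro x hx
          rcases List.mem_append.mp hx with hx | hx
          · exact (mem_st hx).1.trans' (by omega)
          · rcases List.mem_cons.mp hx with rfl | hx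
            · omega
            · simp_all [List.eq_of_mem_replicate hx])]
    rw [show ((k+2):ℕ) :: ((st k ++ 2 :: List.replicate s 1) ++ [1])
        = st (k+1) ++ 2 :: List.replicate (s+1) 1 by
      show _ = (k+2) :: (st k ++ 2 :: List.replicate (s+1) 1)
      rw [List.replicate_succ']
      simp]
    rw [ih (s+1), show (s+1) + k = s + (k+1) by omega]

lemma lemD (v s : ℕ) (hv : 3 ≤ v) :
    simpStep ((v+1) :: (st (v-2) ++ List.replicate s 1)) = st (v-2) ++ 2 :: List.replicate s 1 := by
  obtain ⟨w, rfl⟩ : ∃ w, v = w + 3 := ⟨v - 3, by omega⟩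
  have hst : st (w+3-2) = (w+2) :: st w := by
    rw [show w+3-2 = w+1 by omega]; rfl
  rw [hst]
  rw [show (w+3+1) :: ((w+2) :: st w ++ List.replicate s 1)
      = (w+4) :: (w+2) :: (st w ++ List.replicate s 1) by simp]
  rw [simpStep_eq]
  · rw [if_neg (by omega), if_neg (by omega)]
    rw [show w+4-(w+2) = 2 by omega]
    rw [show ((w+2) : ℕ) :: (st w ++ List.replicate s 1) = ((w+2) :: st w) ++ List.replicate s 1 by simp]
    rw [insertDesc_two_split ((w+2) :: st w) (List.replicate s 1)
      (by intro y hy; rcases List.mem_cons.mp hy with rfl | hy; omega; exact (mem_st hy).1)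
      (by intro y hy; simp_all [List.eq_of_mem_replicate hy])]
  · intro ⟨_, h⟩
    have := h (w+2) (by simp)
    omega

lemma lemE (m : ℕ) : simpStep (2 :: 2 :: List.replicate m 1) = 2 :: List.replicate m 1 := by
  rw [simpStep_eq]
  · simp
  · intro ⟨_, h⟩
    have := h 2 (by simp)
    omega

lemma lemF (k : ℕ) : simpStep (st (k+2)) = st (k+1) ++ [1] := by
  have hst : st (k+2) = (k+3) :: (k+2) :: st k := rfl
  rw [hst, peel (k+2) _ (by omega) (fun x hx => (mem_st hx).1.trans' (by omega))]
  rfl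

def stair (n : ℕ) : List ℕ := (List.range n).reverse.map (· + 1)

lemma stair_succ (n : ℕ) : stair (n+1) = (n+1) :: stair n := by
  simp [stair, List.range_succ]

lemma stair_eq : ∀ n : ℕ, stair (n+1) = st n ++ [1] := by
  intro n
  induction n with
  | zero => rfl
  | succ n ih => rw [stair_succ, ih]; simp [st]

lemma stair_eq' (v : ℕ) (hv : 1 ≤ v) : stair v = st (v-1) ++ [1] := by
  obtain ⟨w, rfl⟩ : ∃ w, v = w + 1 := ⟨v - 1, by omega⟩
  simpa using stair_eq w

lemma seg_one : ∀ j, seg j 1 = st j := by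
  intro j
  induction j with
  | zero => rfl
  | succ j ih =>
    show (1+j+1) :: seg j 1 = (j+2) :: st j
    rw [ih, show 1+j+1 = j+2 by omega]

lemma erase_stair : ∀ (i v : ℕ), 1 ≤ v → (stair (v + i)).eraseIdx i = seg i v ++ stair (v-1) := by
  intro i
  induction i with
  | zero =>
    intro v hv
    obtain ⟨w, rfl⟩ : ∃ w, v = w + 1 := ⟨v - 1, by omega⟩
    rw [stair_succ]
    simp [seg]
  | succ i ih =>
    intro v hv
    rw [show v + (i+1) = (v+i) + 1 by omega, stair_succ, List.eraseIdx_cons_succ, ih v hv]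
    show (v+i+1) :: (seg i v ++ stair (v-1)) = ((v+i+1) :: seg i v) ++ stair (v-1)
    rfl

lemma simple_rep (h q : ℕ) (hh : 2 ≤ h) : IsSimpleP (h :: List.replicate q 1) := by
  refine ⟨by simp, by simpa, ?_⟩
  intro x hx
  simpa using List.eq_of_mem_replicate (by simpa using hx)


lemma rep_one : List.replicate 1 (1:ℕ) = [1] := rfl

lemma terminal_cases (n : ℕ) (hn : 3 ≤ n) (m' : List ℕ)
    (hm' : m' = (List.range n).reverse.map (· + 1) ∨
      ∃ i < n, m' = ((List.range n).reverse.map (· + 1)).eraseIdx i) :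
    ∃ h q, (h = 2 ∨ h = 3) ∧ 1 ≤ q ∧ IsTerminal m' (h :: List.replicate q 1) := by
  obtain ⟨p, rfl⟩ : ∃ p, n = p + 3 := ⟨n - 3, by omega⟩
  rcases hm' with rfl | ⟨i, hi, rfl⟩
  · -- full staircase
    refine ⟨2, p+2, Or.inl rfl, by omega, simple_rep 2 _ (by omega), p+1, ?_⟩
    have h1 : (List.range (p+3)).reverse.map (· + 1) = st (p+2) ++ List.replicate 1 1 := by
      rw [rep_one]; exact stair_eq (p+2)
    rw [h1, lemA (p+1) 1]
  · -- erased one entry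
    by_cases hi0 : i = 0
    · subst hi0
      have h1 : ((List.range (p+3)).reverse.map (· + 1)).eraseIdx 0
          = st (p+1) ++ List.replicate 1 1 := by
        have := erase_stair 0 (p+3) (by omega)
        rw [show (p+3) + 0 = p + 3 by omega] at this
        rw [show ((List.range (p+3)).reverse.map (· + 1)) = stair (p+3) from rfl, this]
        rw [rep_one]
        show stair (p+2) = _
        exact stair_eq (p+1)
      refine ⟨2, p+1, Or.inl rfl, by omega, simple_rep 2 _ (by omega), p, ?_⟩
      rw [h1, lemA p 1]
    · set v := p + 3 - i with hv
      have hvi : v + i = p + 3 := by omega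
      have hm : ((List.range (p+3)).reverse.map (· + 1)).eraseIdx i = seg i v ++ stair (v-1) := by
        rw [show ((List.range (p+3)).reverse.map (· + 1)) = stair (v + i) by rw [hvi]; rfl]
        exact erase_stair i v (by omega)
      by_cases hv1 : v = 1
      · -- removed the bottom 1
        have hi2 : i = p + 2 := by omega
        have hm2 : ((List.range (p+3)).reverse.map (· + 1)).eraseIdx i = st (p+2) := by
          rw [hm, hv1, seg_one]
          show st i ++ stair 0 = st (p+2)
          rw [hi2]
          simp [stair]
        refine ⟨2, p+1, Or.inl rfl, by omega, simple_rep 2 _ (by omega), p+1, ?_⟩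
        rw [hm2, Function.iterate_succ_apply, lemF p, ← rep_one, lemA p 1]
      · by_cases hv2 : v = 2
        · -- removed the 2
          have hm2 : ((List.range (p+3)).reverse.map (· + 1)).eraseIdx i
              = seg ((i-1)+1) 2 ++ (st 0 ++ List.replicate 1 1) := by
            rw [hm, hv2, show (i-1)+1 = i by omega]
            rfl
          refine ⟨3, i, Or.inr rfl, by omega, simple_rep 3 _ (by omega), i-1, ?_⟩
          rw [hm2, lemB (i-1) 2 1 (by omega)]
          show (3 : ℕ) :: ([] ++ List.replicate (1+(i-1)) 1) = _
          rw [show 1 + (i-1) = i by omega]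
          simp
        · -- removed v with 3 ≤ v ≤ p+2
          have hv3 : 3 ≤ v := by omega
          have hiv : 1 ≤ i := by omega
          have hm2 : ((List.range (p+3)).reverse.map (· + 1)).eraseIdx i
              = seg ((i-1)+1) v ++ (st (v-2) ++ List.replicate 1 1) := by
            rw [hm, show (i-1)+1 = i by omega]
            congr 1
            rw [rep_one, show (v:ℕ)-2 = v-1-1 by omega]
            exact stair_eq' (v-1) (by omega)
          have e1 : simpStep^[i-1] (((List.range (p+3)).reverse.map (· + 1)).eraseIdx i)
              = (v+1) :: (st (v-2) ++ List.replicate (1+(i-1)) 1) := by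
            rw [hm2, lemB (i-1) v 1 (by omega)]
          rw [show 1 + (i-1) = i by omega] at e1
          have e2 : simpStep^[(i-1)+1] (((List.range (p+3)).reverse.map (· + 1)).eraseIdx i)
              = st (v-2) ++ 2 :: List.replicate i 1 := by
            rw [Function.iterate_succ_apply', e1, lemD v i hv3]
          have e3 : simpStep^[(v-3) + ((i-1)+1)] (((List.range (p+3)).reverse.map (· + 1)).eraseIdx i)
              = 2 :: 2 :: List.replicate (i+(v-3)) 1 := by
            rw [Function.iterate_add_apply, e2, show st (v-2) = st ((v-3)+1) by rw [show v-2 = (v-3)+1 by omega], lemC (v-3) i]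
          refine ⟨2, i+(v-3), Or.inl rfl, by omega, simple_rep 2 _ (by omega), (v-3)+((i-1)+1)+1, ?_⟩
          rw [Function.iterate_succ_apply', e3, lemE]


/-! ### Generic lemmas about walks in monotone nets -/

def Mono (G : Net) : Prop := ∀ a ∈ G.arcs, G.src a < G.tgt a

lemma walk_bound {G : Net} (hG : Mono G) :
    ∀ (l : List ℕ) (u v : ℕ), IsWalk G l u v → u + l.length ≤ v := by
  intro l
  induction l with
  | nil => rintro u v ⟨rfl, _⟩; simp
  | cons a l ih =>
    rintro u v ⟨ha, rfl, hw⟩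
    have h1 := ih _ _ hw
    have h2 := hG a ha
    simp only [List.length_cons]
    omega

lemma mono_acyclic {G : Net} (hG : Mono G) :
    ∀ (v : ℕ) (l : List ℕ), l ≠ [] → ¬ IsWalk G l v v := by
  intro v l hl hw
  have := walk_bound hG l v v hw
  have : l.length = 0 := by omega
  exact hl (List.length_eq_zero_iff.mp this)

lemma walks_finite {G : Net} (hG : Mono G) (u v : ℕ) : {l : List ℕ | IsWalk G l u v}.Finite := by
  have key : ∀ (k u : ℕ), {l : List ℕ | IsWalk G l u v ∧ l.length ≤ k}.Finite := by
    intro k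
    induction k with
    | zero =>
      intro u
      apply Set.Finite.subset (Set.finite_singleton ([] : List ℕ))
      rintro l ⟨_, h2⟩
      have : l = [] := List.length_eq_zero_iff.mp (by omega)
      simp [this]
    | succ k ih =>
      intro u
      apply Set.Finite.subset (Set.Finite.union (Set.finite_singleton ([] : List ℕ))
        (Set.Finite.biUnion (G.arcs.finite_toSet)
          (fun a _ => ((ih (G.tgt a)).image (a :: ·)))))
      rintro l ⟨hw, hlen⟩
      cases l with
      | nil => exact Or.inl rfl
      | cons a l' =>
        exact Or.inr (Set.mem_biUnion hw.1 ⟨l', ⟨hw.2.2, by simpa using hlen⟩, rfl⟩)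
  apply Set.Finite.subset (key v u)
  intro l hl
  exact ⟨hl, by have := walk_bound hG l u v hl; omega⟩

lemma nPaths_self {G : Net} (hG : Mono G) {v : ℕ} (hv : v ∈ G.verts) : nPaths G v v = 1 := by
  have hset : {l : List ℕ | IsWalk G l v v} = {[]} := by
    ext l
    constructor
    · intro hl
      cases l with
      | nil => rfl
      | cons a l' =>
        exfalso
        have := walk_bound hG _ _ _ hl
        simp [List.length] at this
    · rintro rfl
      exact ⟨rfl, hv⟩
  rw [nPaths, hset, Set.ncard_singleton]

lemma nPaths_dead {G : Net} {u v : ℕ} (hw : ∀ a ∈ G.arcs, G.src a ≠ u) (huv : u ≠ v) :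
    nPaths G u v = 0 := by
  have hset : {l : List ℕ | IsWalk G l u v} = ∅ := by
    ext l
    simp only [Set.mem_setOf_eq, Set.mem_empty_iff_false, iff_false]
    intro hl
    cases l with
    | nil => exact huv hl.1
    | cons a l' => exact hw a hl.1 hl.2.1
  rw [nPaths, hset, Set.ncard_empty]

lemma nPaths_one {G : Net} (huv : u ≠ v) (a : ℕ) (ha : a ∈ G.arcs) (hs : G.src a = u)
    (huniq : ∀ b ∈ G.arcs, G.src b = u → b = a) :
    nPaths G u v = nPaths G (G.tgt a) v := by
  have hset : {l : List ℕ | IsWalk G l u v} = (a :: ·) '' {l : List ℕ | IsWalk G l (G.tgt a) v} := by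
    ext l
    constructor
    · intro hl
      cases l with
      | nil => exact absurd hl.1 huv
      | cons b l' =>
        have hb : b = a := huniq b hl.1 hl.2.1
        subst hb
        exact ⟨l', hl.2.2, rfl⟩
    · rintro ⟨l', hl', rfl⟩
      exact ⟨ha, hs, hl'⟩
  rw [nPaths, hset, Set.ncard_image_of_injective _ (fun x y h => by injection h)]
  rfl

lemma nPaths_two {G : Net} (hG : Mono G) (huv : u ≠ v) (a b : ℕ)
    (ha : a ∈ G.arcs) (hb : b ∈ G.arcs) (hsa : G.src a = u) (hsb : G.src b = u) (hab : a ≠ b)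
    (huniq : ∀ c ∈ G.arcs, G.src c = u → c = a ∨ c = b) :
    nPaths G u v = nPaths G (G.tgt a) v + nPaths G (G.tgt b) v := by
  have hset : {l : List ℕ | IsWalk G l u v}
      = (a :: ·) '' {l : List ℕ | IsWalk G l (G.tgt a) v}
        ∪ (b :: ·) '' {l : List ℕ | IsWalk G l (G.tgt b) v} := by
    ext l
    constructor
    · intro hl
      cases l with
      | nil => exact absurd hl.1 huv
      | cons c l' =>
        rcases huniq c hl.1 hl.2.1 with rfl | rfl
        · exact Or.inl ⟨l', hl.2.2, rfl⟩
        · exact Or.inr ⟨l', hl.2.2, rfl⟩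
    · rintro (⟨l', hl', rfl⟩ | ⟨l', hl', rfl⟩)
      · exact ⟨ha, hsa, hl'⟩
      · exact ⟨hb, hsb, hl'⟩
  have hdisj : Disjoint ((a :: ·) '' {l : List ℕ | IsWalk G l (G.tgt a) v})
      ((b :: ·) '' {l : List ℕ | IsWalk G l (G.tgt b) v}) := by
    rw [Set.disjoint_left]
    rintro x ⟨l1, _, rfl⟩ ⟨l2, _, h⟩
    exact hab (by injection h.symm)
  rw [nPaths, hset, Set.ncard_union_eq hdisj
    ((walks_finite hG _ _).image _) ((walks_finite hG _ _).image _),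
    Set.ncard_image_of_injective _ (fun x y h => by injection h),
    Set.ncard_image_of_injective _ (fun x y h => by injection h)]
  rfl


/-! ### The network `N2 q` realizing `(2,1,...,1)` with `q` ones -/

def src2 (q a : ℕ) : ℕ :=
  if a ≤ q then a else if a = q+1 then q else if a = q+2 then q+1 else a - (q+3)

def tgt2 (q a : ℕ) : ℕ :=
  if a ≤ q then a+1 else if a = q+1 then q+1 else if a = q+2 then q+2 else a

def N2 (q : ℕ) : Net := ⟨Finset.range (2*q+3), Finset.range (2*q+3), src2 q, tgt2 q⟩

lemma N2_src (q : ℕ) : (N2 q).src = src2 q := rfl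
lemma N2_tgt (q : ℕ) : (N2 q).tgt = tgt2 q := rfl
lemma N2_arcs (q a : ℕ) : a ∈ (N2 q).arcs ↔ a < 2*q+3 := Finset.mem_range
lemma N2_verts (q v : ℕ) : v ∈ (N2 q).verts ↔ v < 2*q+3 := Finset.mem_range

lemma mono2 (q : ℕ) : Mono (N2 q) := by
  intro a ha
  rw [N2_arcs] at ha
  rw [N2_src, N2_tgt]
  unfold src2 tgt2
  split_ifs <;> omega

section N2deg
variable {q : ℕ}

lemma out2_comb {v : ℕ} (hv : v < q) :
    (N2 q).arcs.filter (fun a => (N2 q).src a = v) = {v, q+3+v} := by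
  ext a
  rw [Finset.mem_filter]; simp only [N2_arcs, N2_src, Finset.mem_filter, Finset.mem_range, Finset.mem_insert,
    Finset.mem_singleton, src2]
  split_ifs <;> omega

lemma out2_u : (N2 q).arcs.filter (fun a => (N2 q).src a = q) = {q, q+1} := by
  ext a
  rw [Finset.mem_filter]; simp only [N2_arcs, N2_src, Finset.mem_filter, Finset.mem_range, Finset.mem_insert,
    Finset.mem_singleton, src2]
  split_ifs <;> omega

lemma out2_h : (N2 q).arcs.filter (fun a => (N2 q).src a = q+1) = {q+2} := by
  ext a
  rw [Finset.mem_filter]; simp only [N2_arcs, N2_src, Finset.mem_filter, Finset.mem_range, Finset.mem_singleton, src2]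
  split_ifs <;> omega

lemma out2_tail {v : ℕ} (hv : q+2 ≤ v) :
    (N2 q).arcs.filter (fun a => (N2 q).src a = v) = ∅ := by
  ext a
  rw [Finset.mem_filter]; simp only [N2_arcs, N2_src, Finset.mem_filter, Finset.mem_range, Finset.notMem_empty,
    iff_false, not_and, src2]
  intro ha
  split_ifs <;> first | exact not_false | omega

lemma in2_root : (N2 q).arcs.filter (fun a => (N2 q).tgt a = 0) = ∅ := by
  ext a
  rw [Finset.mem_filter]; simp only [N2_arcs, N2_tgt, Finset.mem_filter, Finset.mem_range, Finset.notMem_empty,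
    iff_false, not_and, tgt2]
  intro ha
  split_ifs <;> first | exact not_false | omega

lemma in2_mid {v : ℕ} (h1 : 1 ≤ v) (h2 : v ≤ q) :
    (N2 q).arcs.filter (fun a => (N2 q).tgt a = v) = {v-1} := by
  ext a
  rw [Finset.mem_filter]; simp only [N2_arcs, N2_tgt, Finset.mem_filter, Finset.mem_range, Finset.mem_singleton, tgt2]
  split_ifs <;> omega

lemma in2_h : (N2 q).arcs.filter (fun a => (N2 q).tgt a = q+1) = {q, q+1} := by
  ext a
  rw [Finset.mem_filter]; simp only [N2_arcs, N2_tgt, Finset.mem_filter, Finset.mem_range, Finset.mem_insert,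
    Finset.mem_singleton, tgt2]
  split_ifs <;> omega

lemma in2_x1 : (N2 q).arcs.filter (fun a => (N2 q).tgt a = q+2) = {q+2} := by
  ext a
  rw [Finset.mem_filter]; simp only [N2_arcs, N2_tgt, Finset.mem_filter, Finset.mem_range, Finset.mem_singleton, tgt2]
  split_ifs <;> omega

lemma in2_leaf {v : ℕ} (h1 : q+3 ≤ v) (h2 : v < 2*q+3) :
    (N2 q).arcs.filter (fun a => (N2 q).tgt a = v) = {v} := by
  ext a
  rw [Finset.mem_filter]; simp only [N2_arcs, N2_tgt, Finset.mem_filter, Finset.mem_range, Finset.mem_singleton, tgt2]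
  split_ifs <;> omega

lemma outDeg2_comb {v : ℕ} (hv : v < q) : outDeg (N2 q) v = 2 := by
  rw [outDeg, out2_comb hv, Finset.card_insert_of_notMem (by simp), Finset.card_singleton]

lemma outDeg2_u : outDeg (N2 q) q = 2 := by
  rw [outDeg, out2_u, Finset.card_insert_of_notMem (by simp), Finset.card_singleton]

lemma outDeg2_h : outDeg (N2 q) (q+1) = 1 := by
  rw [outDeg, out2_h, Finset.card_singleton]

lemma outDeg2_tail {v : ℕ} (hv : q+2 ≤ v) : outDeg (N2 q) v = 0 := by
  rw [outDeg, out2_tail hv, Finset.card_empty]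

lemma inDeg2_root : inDeg (N2 q) 0 = 0 := by
  rw [inDeg, in2_root, Finset.card_empty]

lemma inDeg2_mid {v : ℕ} (h1 : 1 ≤ v) (h2 : v ≤ q) : inDeg (N2 q) v = 1 := by
  rw [inDeg, in2_mid h1 h2, Finset.card_singleton]

lemma inDeg2_h : inDeg (N2 q) (q+1) = 2 := by
  rw [inDeg, in2_h, Finset.card_insert_of_notMem (by simp), Finset.card_singleton]

lemma inDeg2_x1 : inDeg (N2 q) (q+2) = 1 := by
  rw [inDeg, in2_x1, Finset.card_singleton]

lemma inDeg2_leaf {v : ℕ} (h1 : q+3 ≤ v) (h2 : v < 2*q+3) : inDeg (N2 q) v = 1 := by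
  rw [inDeg, in2_leaf h1 h2, Finset.card_singleton]

lemma leaf2 {v : ℕ} (h1 : q+2 ≤ v) (h2 : v < 2*q+3) : IsLeafN (N2 q) v := by
  refine ⟨(N2_verts q v).mpr h2, ?_, outDeg2_tail h1⟩
  rcases eq_or_lt_of_le h1 with rfl | h
  · exact inDeg2_x1
  · exact inDeg2_leaf (by omega) h2

lemma leaf2' {v : ℕ} (hq : 1 ≤ q) (h : IsLeafN (N2 q) v) : q+2 ≤ v ∧ v < 2*q+3 := by
  obtain ⟨hv, _, hout⟩ := h
  rw [N2_verts] at hv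
  refine ⟨?_, hv⟩
  by_contra hlt
  push_neg at hlt
  rcases Nat.lt_or_ge v q with h1 | h1
  · rw [outDeg2_comb h1] at hout; omega
  · rcases Nat.eq_or_lt_of_le h1 with h2 | h2
    · rw [← h2, outDeg2_u] at hout; omega
    · rw [show v = q+1 by omega, outDeg2_h] at hout; omega

lemma root2 {r : ℕ} (hr : IsRootN (N2 q) r) : r = 0 := by
  obtain ⟨hv, hin⟩ := hr
  rw [N2_verts] at hv
  by_contra h0
  rcases Nat.lt_or_ge r (q+1) with h1 | h1
  · rw [inDeg2_mid (by omega) (by omega)] at hin; omega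
  · rcases Nat.eq_or_lt_of_le h1 with rfl | h2
    · rw [inDeg2_h] at hin; omega
    · rcases Nat.eq_or_lt_of_le h2 with h3 | h3
      · rw [show r = q+2 by omega, inDeg2_x1] at hin; omega
      · rw [inDeg2_leaf (by omega) hv] at hin; omega

lemma retic2 {v : ℕ} (hq : 1 ≤ q) (h : IsReticN (N2 q) v) : v = q+1 := by
  obtain ⟨hv, hin, _⟩ := h
  rw [N2_verts] at hv
  by_contra h0
  rcases Nat.eq_or_lt_of_le (Nat.zero_le v) with rfl | hpos
  · rw [inDeg2_root] at hin; omega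
  · rcases Nat.lt_or_ge v (q+1) with h1 | h1
    · rw [inDeg2_mid (by omega) (by omega)] at hin; omega
    · rcases Nat.eq_or_lt_of_le h1 with rfl | h2
      · exact h0 rfl
      · rcases Nat.eq_or_lt_of_le h2 with h3 | h3
        · rw [show v = q+2 by omega, inDeg2_x1] at hin; omega
        · rw [inDeg2_leaf (by omega) hv] at hin; omega

lemma phylo2 (hq : 1 ≤ q) : IsPhylo (N2 q) := by
  refine ⟨?_, ?_, ?_, mono_acyclic (mono2 q), ?_, ?_, ?_⟩
  · intro a ha
    rw [N2_arcs] at ha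
    rw [N2_verts, N2_src]
    unfold src2; split_ifs <;> omega
  · intro a ha
    rw [N2_arcs] at ha
    rw [N2_verts, N2_tgt]
    unfold tgt2; split_ifs <;> omega
  · intro a ha
    exact Nat.ne_of_lt (mono2 q a ha)
  · refine ⟨0, ⟨(N2_verts q 0).mpr (by omega), inDeg2_root⟩, fun r hr => root2 hr⟩
  · intro r hr
    rw [root2 hr]
    exact outDeg2_comb (by omega)
  · intro v hv
    rw [N2_verts] at hv
    rcases Nat.eq_or_lt_of_le (Nat.zero_le v) with rfl | hpos
    · exact Or.inl ⟨(N2_verts q 0).mpr (by omega), inDeg2_root⟩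
    · rcases Nat.lt_or_ge v (q+1) with h1 | h1
      · exact Or.inr (Or.inr (Or.inl ⟨(N2_verts q v).mpr (by omega),
          inDeg2_mid (by omega) (by omega), by
            rcases Nat.lt_or_ge v q with h | h
            · exact outDeg2_comb h
            · rw [show v = q by omega]; exact outDeg2_u⟩))
      · rcases Nat.eq_or_lt_of_le h1 with rfl | h2
        · exact Or.inr (Or.inr (Or.inr ⟨(N2_verts q _).mpr (by omega), inDeg2_h, outDeg2_h⟩))
        · exact Or.inr (Or.inl (leaf2 (by omega) hv))

lemma dead2 {w v : ℕ} (hw : q+2 ≤ w) (hwv : w ≠ v) : nPaths (N2 q) w v = 0 := by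
  apply nPaths_dead _ hwv
  intro a ha
  rw [N2_arcs] at ha
  rw [N2_src]
  unfold src2; split_ifs <;> omega

lemma px1_chain (hq : 1 ≤ q) : ∀ d i, i + d = q → nPaths (N2 q) i (q+2) = 2 := by
  intro d
  induction d with
  | zero =>
    intro i hi
    rw [show i = q by omega]
    have h1 : nPaths (N2 q) (q+1) (q+2) = 1 := by
      rw [nPaths_one (by omega) (q+2) ((N2_arcs q _).mpr (by omega))
        (by rw [N2_src]; unfold src2; split_ifs <;> omega)
        (by intro b hb hsb
            rw [N2_arcs] at hb
            rw [N2_src] at hsb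
            unfold src2 at hsb
            split_ifs at hsb <;> omega)]
      rw [show (N2 q).tgt (q+2) = q+2 by rw [N2_tgt]; unfold tgt2; split_ifs <;> omega]
      exact nPaths_self (mono2 q) ((N2_verts q _).mpr (by omega))
    rw [nPaths_two (mono2 q) (by omega) q (q+1) ((N2_arcs q _).mpr (by omega))
      ((N2_arcs q _).mpr (by omega))
      (by rw [N2_src]; unfold src2; split_ifs <;> omega)
      (by rw [N2_src]; unfold src2; split_ifs <;> omega)
      (by omega)
      (by intro c hc hsc
          rw [N2_arcs] at hc
          rw [N2_src] at hsc
          unfold src2 at hsc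
          split_ifs at hsc <;> omega)]
    rw [show (N2 q).tgt q = q+1 by rw [N2_tgt]; unfold tgt2; split_ifs <;> omega,
      show (N2 q).tgt (q+1) = q+1 by rw [N2_tgt]; unfold tgt2; split_ifs <;> omega, h1]
  | succ d ih =>
    intro i hi
    have hiq : i < q := by omega
    rw [nPaths_two (mono2 q) (by omega) i (q+3+i) ((N2_arcs q _).mpr (by omega))
      ((N2_arcs q _).mpr (by omega))
      (by rw [N2_src]; unfold src2; split_ifs <;> omega)
      (by rw [N2_src]; unfold src2; split_ifs <;> omega)
      (by omega)
      (by intro c hc hsc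
          rw [N2_arcs] at hc
          rw [N2_src] at hsc
          unfold src2 at hsc
          split_ifs at hsc <;> omega)]
    rw [show (N2 q).tgt i = i+1 by rw [N2_tgt]; unfold tgt2; split_ifs <;> omega,
      show (N2 q).tgt (q+3+i) = q+3+i by rw [N2_tgt]; unfold tgt2; split_ifs <;> omega,
      ih (i+1) (by omega), dead2 (by omega) (by omega)]

lemma px1 (hq : 1 ≤ q) : nPaths (N2 q) 0 (q+2) = 2 := px1_chain hq q 0 (by omega)

lemma pleaf_zero (hq : 1 ≤ q) {j : ℕ} (hj : j < q) :
    ∀ d i, j < i → i ≤ q → i + d = q → nPaths (N2 q) i (q+3+j) = 0 := by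
  intro d
  induction d with
  | zero =>
    intro i h1 h2 hi
    rw [show i = q by omega]
    rw [nPaths_two (mono2 q) (by omega) q (q+1) ((N2_arcs q _).mpr (by omega))
      ((N2_arcs q _).mpr (by omega))
      (by rw [N2_src]; unfold src2; split_ifs <;> omega)
      (by rw [N2_src]; unfold src2; split_ifs <;> omega)
      (by omega)
      (by intro c hc hsc
          rw [N2_arcs] at hc
          rw [N2_src] at hsc
          unfold src2 at hsc
          split_ifs at hsc <;> omega)]
    rw [show (N2 q).tgt q = q+1 by rw [N2_tgt]; unfold tgt2; split_ifs <;> omega,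
      show (N2 q).tgt (q+1) = q+1 by rw [N2_tgt]; unfold tgt2; split_ifs <;> omega]
    have : nPaths (N2 q) (q+1) (q+3+j) = 0 := by
      rw [nPaths_one (by omega) (q+2) ((N2_arcs q _).mpr (by omega))
        (by rw [N2_src]; unfold src2; split_ifs <;> omega)
        (by intro b hb hsb
            rw [N2_arcs] at hb
            rw [N2_src] at hsb
            unfold src2 at hsb
            split_ifs at hsb <;> omega)]
      rw [show (N2 q).tgt (q+2) = q+2 by rw [N2_tgt]; unfold tgt2; split_ifs <;> omega]
      exact dead2 (by omega) (by omega)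
    rw [this]
  | succ d ih =>
    intro i h1 h2 hi
    have hiq : i < q := by omega
    rw [nPaths_two (mono2 q) (by omega) i (q+3+i) ((N2_arcs q _).mpr (by omega))
      ((N2_arcs q _).mpr (by omega))
      (by rw [N2_src]; unfold src2; split_ifs <;> omega)
      (by rw [N2_src]; unfold src2; split_ifs <;> omega)
      (by omega)
      (by intro c hc hsc
          rw [N2_arcs] at hc
          rw [N2_src] at hsc
          unfold src2 at hsc
          split_ifs at hsc <;> omega)]
    rw [show (N2 q).tgt i = i+1 by rw [N2_tgt]; unfold tgt2; split_ifs <;> omega,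
      show (N2 q).tgt (q+3+i) = q+3+i by rw [N2_tgt]; unfold tgt2; split_ifs <;> omega,
      ih (i+1) (by omega) (by omega) (by omega), dead2 (by omega) (by omega)]

lemma pleaf_chain (hq : 1 ≤ q) {j : ℕ} (hj : j < q) :
    ∀ d i, i ≤ j → i + d = j → nPaths (N2 q) i (q+3+j) = 1 := by
  intro d
  induction d with
  | zero =>
    intro i h1 hi
    rw [show i = j by omega]
    rw [nPaths_two (mono2 q) (by omega) j (q+3+j) ((N2_arcs q _).mpr (by omega))
      ((N2_arcs q _).mpr (by omega))
      (by rw [N2_src]; unfold src2; split_ifs <;> omega)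
      (by rw [N2_src]; unfold src2; split_ifs <;> omega)
      (by omega)
      (by intro c hc hsc
          rw [N2_arcs] at hc
          rw [N2_src] at hsc
          unfold src2 at hsc
          split_ifs at hsc <;> omega)]
    rw [show (N2 q).tgt j = j+1 by rw [N2_tgt]; unfold tgt2; split_ifs <;> omega,
      show (N2 q).tgt (q+3+j) = q+3+j by rw [N2_tgt]; unfold tgt2; split_ifs <;> omega]
    rw [pleaf_zero hq hj (q - (j+1)) (j+1) (by omega) (by omega) (by omega),
      nPaths_self (mono2 q) ((N2_verts q _).mpr (by omega))]
  | succ d ih =>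
    intro i h1 hi
    rw [nPaths_two (mono2 q) (by omega) i (q+3+i) ((N2_arcs q _).mpr (by omega))
      ((N2_arcs q _).mpr (by omega))
      (by rw [N2_src]; unfold src2; split_ifs <;> omega)
      (by rw [N2_src]; unfold src2; split_ifs <;> omega)
      (by omega)
      (by intro c hc hsc
          rw [N2_arcs] at hc
          rw [N2_src] at hsc
          unfold src2 at hsc
          split_ifs at hsc <;> omega)]
    rw [show (N2 q).tgt i = i+1 by rw [N2_tgt]; unfold tgt2; split_ifs <;> omega,
      show (N2 q).tgt (q+3+i) = q+3+i by rw [N2_tgt]; unfold tgt2; split_ifs <;> omega,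
      ih (i+1) (by omega) (by omega), dead2 (by omega) (by omega)]

lemma pleaf (hq : 1 ≤ q) {j : ℕ} (hj : j < q) : nPaths (N2 q) 0 (q+3+j) = 1 :=
  pleaf_chain hq hj j 0 (by omega) (by omega)

lemma hgt2 (hq : 1 ≤ q) : IsHGT (N2 q) (fun v => (v : ℝ)) := by
  refine ⟨fun v _ => Nat.cast_nonneg v, ?_, ?_, ?_⟩
  · intro a ha
    have := mono2 q a ha
    exact ⟨fun _ => le_of_lt (by simp only [Nat.cast_lt]; exact this),
      fun _ => by simp only [Nat.cast_lt]; exact this⟩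
  · intro u hu hleaf
    rw [N2_verts] at hu
    have hu2 : u < q+2 := by
      by_contra h
      exact hleaf (leaf2 (by omega) hu)
    rcases Nat.lt_or_ge u (q+1) with h1 | h1
    · refine ⟨u+1, ⟨u, (N2_arcs q _).mpr (by omega),
        by rw [N2_src]; unfold src2; split_ifs <;> omega,
        by rw [N2_tgt]; unfold tgt2; split_ifs <;> omega⟩, by simp only [Nat.cast_lt]; omega⟩
    · have : u = q+1 := by omega
      subst this
      refine ⟨q+2, ⟨q+2, (N2_arcs q _).mpr (by omega),
        by rw [N2_src]; unfold src2; split_ifs <;> omega,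
        by rw [N2_tgt]; unfold tgt2; split_ifs <;> omega⟩, by simp only [Nat.cast_lt]; omega⟩
  · intro v hret hbead
    exfalso
    apply hbead
    have hv : v = q+1 := retic2 hq hret
    refine ⟨q, q+1, (N2_arcs q _).mpr (by omega), (N2_arcs q _).mpr (by omega), by omega, ?_, ?_, ?_⟩
    · rw [N2_src]; unfold src2; split_ifs <;> omega
    · rw [N2_tgt]; unfold tgt2; split_ifs <;> omega
    · right
      rw [N2_tgt]; unfold tgt2; split_ifs <;> omega

end N2deg

lemma getD_replicate_one : ∀ q k : ℕ, k < q → (List.replicate q 1).getD k (0:ℕ) = 1 := by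
  intro q
  induction q with
  | zero => omega
  | succ q ih =>
    intro k hk
    rw [List.replicate_succ]
    cases k with
    | zero => rfl
    | succ k => rw [List.getD_cons_succ]; exact ih k (by omega)

lemma realize2 (q : ℕ) (hq : 1 ≤ q) :
    ∃ (R : LNet) (t : ℕ → ℝ), RealizesL R (2 :: List.replicate q 1) ∧ IsHGT R.net t := by
  refine ⟨⟨N2 q, fun i => if i = 0 then q+2 else q+2+i⟩, fun v => (v : ℝ),
    ⟨phylo2 hq, ?_, ?_, ?_, ?_⟩, hgt2 hq⟩
  · intro i hi
    have hi' : i < q+1 := by simpa using hi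
    dsimp only
    split_ifs with h
    · exact leaf2 (by omega) (by omega)
    · exact leaf2 (by omega) (by omega)
  · intro i j hi hj hij
    dsimp only at hij
    split_ifs at hij <;> omega
  · intro v hv
    have hb := leaf2' hq hv
    by_cases h : v = q+2
    · exact ⟨0, by simp, by simp [h]⟩
    · refine ⟨v - (q+2), by simp; omega, ?_⟩
      dsimp only
      rw [if_neg (by omega)]
      omega
  · intro i hi r hr
    rw [root2 hr]
    have hi' : i < q+1 := by simpa using hi
    by_cases h : i = 0
    · subst h
      dsimp only
      rw [if_pos rfl, px1 hq]
      rfl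
    · dsimp only
      rw [if_neg h, show q+2+i = q+3+(i-1) by omega, pleaf hq (show i-1 < q by omega)]
      obtain ⟨k, rfl⟩ : ∃ k, i = k+1 := ⟨i-1, by omega⟩
      rw [List.getD_cons_succ, getD_replicate_one q k (by omega)]




/-! ### The network `N3 q` realizing `(3,1,...,1)` with `q` ones -/

def src3 (q a : ℕ) : ℕ :=
  if a ≤ 1 then 0 else if a ≤ 3 then q+1 else if a = 4 then q+2 else if a = 5 then q+3
  else if a ≤ q+5 then a-5 else a-(q+5)

def tgt3 (q a : ℕ) : ℕ :=
  if a = 0 then q+1 else if a = 1 then 1 else if a ≤ 3 then q+2 else if a = 4 then q+3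
  else if a = 5 then q+4 else if a = q+5 then q+3 else if a ≤ q+4 then a-4 else a-1

def t3n (q v : ℕ) : ℕ :=
  if v = 0 then 0 else if v ≤ q then v+2 else if v = q+1 then 1 else if v = q+2 then 2
  else if v = q+3 then q+2 else if v = q+4 then q+3 else v - q - 1

def N3 (q : ℕ) : Net := ⟨Finset.range (2*q+5), Finset.range (2*q+6), src3 q, tgt3 q⟩

lemma N3_src (q : ℕ) : (N3 q).src = src3 q := rfl
lemma N3_tgt (q : ℕ) : (N3 q).tgt = tgt3 q := rfl
lemma N3_arcs (q a : ℕ) : a ∈ (N3 q).arcs ↔ a < 2*q+6 := Finset.mem_range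
lemma N3_verts (q v : ℕ) : v ∈ (N3 q).verts ↔ v < 2*q+5 := Finset.mem_range

section N3deg
variable {q : ℕ}

lemma mono3 (hq : 1 ≤ q) : Mono (N3 q) := by
  intro a ha
  rw [N3_arcs] at ha
  rw [N3_src, N3_tgt]
  unfold src3 tgt3
  split_ifs <;> omega

lemma out3_root (hq : 1 ≤ q) : (N3 q).arcs.filter (fun a => (N3 q).src a = 0) = {0, 1} := by
  ext a
  rw [Finset.mem_filter]; simp only [N3_arcs, N3_src, Finset.mem_filter, Finset.mem_range, Finset.mem_insert,
    Finset.mem_singleton, src3]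
  split_ifs <;> (try simp only [and_false, and_true, false_iff, true_iff, iff_false, iff_true, false_and, true_and]) <;> omega

lemma out3_chain (hq : 1 ≤ q) {v : ℕ} (h1 : 1 ≤ v) (h2 : v ≤ q) :
    (N3 q).arcs.filter (fun a => (N3 q).src a = v) = {v+5, q+5+v} := by
  ext a
  rw [Finset.mem_filter]; simp only [N3_arcs, N3_src, Finset.mem_filter, Finset.mem_range, Finset.mem_insert,
    Finset.mem_singleton, src3]
  split_ifs <;> (try simp only [and_false, and_true, false_iff, true_iff, iff_false, iff_true, false_and, true_and]) <;> omega

lemma out3_u (hq : 1 ≤ q) : (N3 q).arcs.filter (fun a => (N3 q).src a = q+1) = {2, 3} := by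
  ext a
  rw [Finset.mem_filter]; simp only [N3_arcs, N3_src, Finset.mem_filter, Finset.mem_range, Finset.mem_insert,
    Finset.mem_singleton, src3]
  split_ifs <;> (try simp only [and_false, and_true, false_iff, true_iff, iff_false, iff_true, false_and, true_and]) <;> omega

lemma out3_h1 (hq : 1 ≤ q) : (N3 q).arcs.filter (fun a => (N3 q).src a = q+2) = {4} := by
  ext a
  rw [Finset.mem_filter]; simp only [N3_arcs, N3_src, Finset.mem_filter, Finset.mem_range, Finset.mem_singleton, src3]
  split_ifs <;> (try simp only [and_false, and_true, false_iff, true_iff, iff_false, iff_true, false_and, true_and]) <;> omega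

lemma out3_h2 (hq : 1 ≤ q) : (N3 q).arcs.filter (fun a => (N3 q).src a = q+3) = {5} := by
  ext a
  rw [Finset.mem_filter]; simp only [N3_arcs, N3_src, Finset.mem_filter, Finset.mem_range, Finset.mem_singleton, src3]
  split_ifs <;> (try simp only [and_false, and_true, false_iff, true_iff, iff_false, iff_true, false_and, true_and]) <;> omega

lemma out3_tail (hq : 1 ≤ q) {v : ℕ} (hv : q+4 ≤ v) :
    (N3 q).arcs.filter (fun a => (N3 q).src a = v) = ∅ := by
  ext a
  rw [Finset.mem_filter]; simp only [N3_arcs, N3_src, Finset.mem_filter, Finset.mem_range, Finset.notMem_empty,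
    iff_false, not_and, src3]
  intro ha
  split_ifs <;> first | exact not_false | omega

lemma in3_root (hq : 1 ≤ q) : (N3 q).arcs.filter (fun a => (N3 q).tgt a = 0) = ∅ := by
  ext a
  rw [Finset.mem_filter]; simp only [N3_arcs, N3_tgt, Finset.mem_filter, Finset.mem_range, Finset.notMem_empty,
    iff_false, not_and, tgt3]
  intro ha
  split_ifs <;> first | exact not_false | omega

lemma in3_one (hq : 1 ≤ q) : (N3 q).arcs.filter (fun a => (N3 q).tgt a = 1) = {1} := by
  ext a
  rw [Finset.mem_filter]; simp only [N3_arcs, N3_tgt, Finset.mem_filter, Finset.mem_range, Finset.mem_singleton, tgt3]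
  split_ifs <;> (try simp only [and_false, and_true, false_iff, true_iff, iff_false, iff_true, false_and, true_and]) <;> omega

lemma in3_chain (hq : 1 ≤ q) {v : ℕ} (h1 : 2 ≤ v) (h2 : v ≤ q) :
    (N3 q).arcs.filter (fun a => (N3 q).tgt a = v) = {v+4} := by
  ext a
  rw [Finset.mem_filter]; simp only [N3_arcs, N3_tgt, Finset.mem_filter, Finset.mem_range, Finset.mem_singleton, tgt3]
  split_ifs <;> (try simp only [and_false, and_true, false_iff, true_iff, iff_false, iff_true, false_and, true_and]) <;> omega

lemma in3_u (hq : 1 ≤ q) : (N3 q).arcs.filter (fun a => (N3 q).tgt a = q+1) = {0} := by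
  ext a
  rw [Finset.mem_filter]; simp only [N3_arcs, N3_tgt, Finset.mem_filter, Finset.mem_range, Finset.mem_singleton, tgt3]
  split_ifs <;> (try simp only [and_false, and_true, false_iff, true_iff, iff_false, iff_true, false_and, true_and]) <;> omega

lemma in3_h1 (hq : 1 ≤ q) : (N3 q).arcs.filter (fun a => (N3 q).tgt a = q+2) = {2, 3} := by
  ext a
  rw [Finset.mem_filter]; simp only [N3_arcs, N3_tgt, Finset.mem_filter, Finset.mem_range, Finset.mem_insert,
    Finset.mem_singleton, tgt3]
  split_ifs <;> (try simp only [and_false, and_true, false_iff, true_iff, iff_false, iff_true, false_and, true_and]) <;> omega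

lemma in3_h2 (hq : 1 ≤ q) : (N3 q).arcs.filter (fun a => (N3 q).tgt a = q+3) = {4, q+5} := by
  ext a
  rw [Finset.mem_filter]; simp only [N3_arcs, N3_tgt, Finset.mem_filter, Finset.mem_range, Finset.mem_insert,
    Finset.mem_singleton, tgt3]
  split_ifs <;> (try simp only [and_false, and_true, false_iff, true_iff, iff_false, iff_true, false_and, true_and]) <;> omega

lemma in3_x1 (hq : 1 ≤ q) : (N3 q).arcs.filter (fun a => (N3 q).tgt a = q+4) = {5} := by
  ext a
  rw [Finset.mem_filter]; simp only [N3_arcs, N3_tgt, Finset.mem_filter, Finset.mem_range, Finset.mem_singleton, tgt3]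
  split_ifs <;> (try simp only [and_false, and_true, false_iff, true_iff, iff_false, iff_true, false_and, true_and]) <;> omega

lemma in3_leaf (hq : 1 ≤ q) {v : ℕ} (h1 : q+5 ≤ v) (h2 : v < 2*q+5) :
    (N3 q).arcs.filter (fun a => (N3 q).tgt a = v) = {v+1} := by
  ext a
  rw [Finset.mem_filter]; simp only [N3_arcs, N3_tgt, Finset.mem_filter, Finset.mem_range, Finset.mem_singleton, tgt3]
  split_ifs <;> (try simp only [and_false, and_true, false_iff, true_iff, iff_false, iff_true, false_and, true_and]) <;> omega

lemma outDeg3_root (hq : 1 ≤ q) : outDeg (N3 q) 0 = 2 := by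
  rw [outDeg, out3_root hq, Finset.card_insert_of_notMem (by simp), Finset.card_singleton]

lemma outDeg3_chain (hq : 1 ≤ q) {v : ℕ} (h1 : 1 ≤ v) (h2 : v ≤ q) : outDeg (N3 q) v = 2 := by
  rw [outDeg, out3_chain hq h1 h2, Finset.card_insert_of_notMem (by simp; omega),
    Finset.card_singleton]

lemma outDeg3_u (hq : 1 ≤ q) : outDeg (N3 q) (q+1) = 2 := by
  rw [outDeg, out3_u hq, Finset.card_insert_of_notMem (by simp), Finset.card_singleton]

lemma outDeg3_h1 (hq : 1 ≤ q) : outDeg (N3 q) (q+2) = 1 := by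
  rw [outDeg, out3_h1 hq, Finset.card_singleton]

lemma outDeg3_h2 (hq : 1 ≤ q) : outDeg (N3 q) (q+3) = 1 := by
  rw [outDeg, out3_h2 hq, Finset.card_singleton]

lemma outDeg3_tail (hq : 1 ≤ q) {v : ℕ} (hv : q+4 ≤ v) : outDeg (N3 q) v = 0 := by
  rw [outDeg, out3_tail hq hv, Finset.card_empty]

lemma inDeg3_root (hq : 1 ≤ q) : inDeg (N3 q) 0 = 0 := by
  rw [inDeg, in3_root hq, Finset.card_empty]

lemma inDeg3_chain (hq : 1 ≤ q) {v : ℕ} (h1 : 1 ≤ v) (h2 : v ≤ q) : inDeg (N3 q) v = 1 := by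
  rcases Nat.eq_or_lt_of_le h1 with h | h
  · rw [← h, inDeg, in3_one hq, Finset.card_singleton]
  · rw [inDeg, in3_chain hq (by omega) h2, Finset.card_singleton]

lemma inDeg3_u (hq : 1 ≤ q) : inDeg (N3 q) (q+1) = 1 := by
  rw [inDeg, in3_u hq, Finset.card_singleton]

lemma inDeg3_h1 (hq : 1 ≤ q) : inDeg (N3 q) (q+2) = 2 := by
  rw [inDeg, in3_h1 hq, Finset.card_insert_of_notMem (by simp), Finset.card_singleton]

lemma inDeg3_h2 (hq : 1 ≤ q) : inDeg (N3 q) (q+3) = 2 := by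
  rw [inDeg, in3_h2 hq, Finset.card_insert_of_notMem (by simp), Finset.card_singleton]

lemma inDeg3_x1 (hq : 1 ≤ q) : inDeg (N3 q) (q+4) = 1 := by
  rw [inDeg, in3_x1 hq, Finset.card_singleton]

lemma inDeg3_leaf (hq : 1 ≤ q) {v : ℕ} (h1 : q+5 ≤ v) (h2 : v < 2*q+5) : inDeg (N3 q) v = 1 := by
  rw [inDeg, in3_leaf hq h1 h2, Finset.card_singleton]

lemma leaf3 (hq : 1 ≤ q) {v : ℕ} (h1 : q+4 ≤ v) (h2 : v < 2*q+5) : IsLeafN (N3 q) v := by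
  refine ⟨(N3_verts q v).mpr h2, ?_, outDeg3_tail hq h1⟩
  rcases Nat.eq_or_lt_of_le h1 with h | h
  · rw [← h]; exact inDeg3_x1 hq
  · exact inDeg3_leaf hq (by omega) h2

lemma leaf3' (hq : 1 ≤ q) {v : ℕ} (h : IsLeafN (N3 q) v) : q+4 ≤ v ∧ v < 2*q+5 := by
  obtain ⟨hv, _, hout⟩ := h
  rw [N3_verts] at hv
  refine ⟨?_, hv⟩
  by_contra hlt
  push_neg at hlt
  rcases Nat.eq_or_lt_of_le (Nat.zero_le v) with rfl | hpos
  · rw [outDeg3_root hq] at hout; omega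
  · rcases Nat.lt_or_ge v (q+1) with h1 | h1
    · rw [outDeg3_chain hq (by omega) (by omega)] at hout; omega
    · rcases Nat.eq_or_lt_of_le h1 with h2 | h2
      · rw [← h2, outDeg3_u hq] at hout; omega
      · rcases Nat.eq_or_lt_of_le h2 with h3 | h3
        · rw [show v = q+2 by omega, outDeg3_h1 hq] at hout; omega
        · rw [show v = q+3 by omega, outDeg3_h2 hq] at hout; omega

lemma root3 (hq : 1 ≤ q) {r : ℕ} (hr : IsRootN (N3 q) r) : r = 0 := by
  obtain ⟨hv, hin⟩ := hr
  rw [N3_verts] at hv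
  by_contra h0
  rcases Nat.lt_or_ge r (q+1) with h1 | h1
  · rw [inDeg3_chain hq (by omega) (by omega)] at hin; omega
  · rcases Nat.eq_or_lt_of_le h1 with h2 | h2
    · rw [← h2, inDeg3_u hq] at hin; omega
    · rcases Nat.lt_or_ge r (q+4) with h3 | h3
      · rcases Nat.eq_or_lt_of_le h2 with h4 | h4
        · rw [show r = q+2 by omega, inDeg3_h1 hq] at hin; omega
        · rw [show r = q+3 by omega, inDeg3_h2 hq] at hin; omega
      · rcases Nat.eq_or_lt_of_le h3 with h4 | h4
        · rw [← h4, inDeg3_x1 hq] at hin; omega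
        · rw [inDeg3_leaf hq (by omega) hv] at hin; omega

lemma retic3 (hq : 1 ≤ q) {v : ℕ} (h : IsReticN (N3 q) v) : v = q+2 ∨ v = q+3 := by
  obtain ⟨hv, hin, _⟩ := h
  rw [N3_verts] at hv
  by_contra h0
  push_neg at h0
  rcases Nat.eq_or_lt_of_le (Nat.zero_le v) with rfl | hpos
  · rw [inDeg3_root hq] at hin; omega
  · rcases Nat.lt_or_ge v (q+1) with h1 | h1
    · rw [inDeg3_chain hq (by omega) (by omega)] at hin; omega
    · rcases Nat.eq_or_lt_of_le h1 with h2 | h2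
      · rw [← h2, inDeg3_u hq] at hin; omega
      · rcases Nat.lt_or_ge v (q+4) with h3 | h3
        · rcases Nat.eq_or_lt_of_le h2 with h4 | h4
          · exact h0.1 (by omega)
          · exact h0.2 (by omega)
        · rcases Nat.eq_or_lt_of_le h3 with h4 | h4
          · rw [← h4, inDeg3_x1 hq] at hin; omega
          · rw [inDeg3_leaf hq (by omega) hv] at hin; omega

lemma phylo3 (hq : 1 ≤ q) : IsPhylo (N3 q) := by
  refine ⟨?_, ?_, ?_, mono_acyclic (mono3 hq), ?_, ?_, ?_⟩
  · intro a ha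
    rw [N3_arcs] at ha
    rw [N3_verts, N3_src]
    unfold src3; split_ifs <;> omega
  · intro a ha
    rw [N3_arcs] at ha
    rw [N3_verts, N3_tgt]
    unfold tgt3; split_ifs <;> omega
  · intro a ha
    exact Nat.ne_of_lt (mono3 hq a ha)
  · exact ⟨0, ⟨(N3_verts q 0).mpr (by omega), inDeg3_root hq⟩, fun r hr => root3 hq hr⟩
  · intro r hr
    rw [root3 hq hr]
    exact outDeg3_root hq
  · intro v hv
    rw [N3_verts] at hv
    rcases Nat.eq_or_lt_of_le (Nat.zero_le v) with rfl | hpos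
    · exact Or.inl ⟨(N3_verts q 0).mpr (by omega), inDeg3_root hq⟩
    · rcases Nat.lt_or_ge v (q+1) with h1 | h1
      · exact Or.inr (Or.inr (Or.inl ⟨(N3_verts q v).mpr (by omega),
          inDeg3_chain hq (by omega) (by omega), outDeg3_chain hq (by omega) (by omega)⟩))
      · rcases Nat.eq_or_lt_of_le h1 with h2 | h2
        · exact Or.inr (Or.inr (Or.inl ⟨(N3_verts q v).mpr (by omega),
            by rw [← h2]; exact inDeg3_u hq, by rw [← h2]; exact outDeg3_u hq⟩))
        · rcases Nat.lt_or_ge v (q+4) with h3 | h3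
          · rcases Nat.eq_or_lt_of_le h2 with h4 | h4
            · exact Or.inr (Or.inr (Or.inr ⟨(N3_verts q v).mpr (by omega),
                by rw [show v = q+2 by omega]; exact inDeg3_h1 hq,
                by rw [show v = q+2 by omega]; exact outDeg3_h1 hq⟩))
            · exact Or.inr (Or.inr (Or.inr ⟨(N3_verts q v).mpr (by omega),
                by rw [show v = q+3 by omega]; exact inDeg3_h2 hq,
                by rw [show v = q+3 by omega]; exact outDeg3_h2 hq⟩))
          · exact Or.inr (Or.inl (leaf3 hq h3 hv))

lemma dead3 (hq : 1 ≤ q) {w v : ℕ} (hw : q+4 ≤ w) (hwv : w ≠ v) : nPaths (N3 q) w v = 0 := by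
  apply nPaths_dead _ hwv
  intro a ha
  rw [N3_arcs] at ha
  rw [N3_src]
  unfold src3; split_ifs <;> omega


lemma src3_val (hq : 1 ≤ q) (a v : ℕ)
    (h : (a ≤ 1 ∧ v = 0) ∨ ((2 ≤ a ∧ a ≤ 3) ∧ v = q+1) ∨ (a = 4 ∧ v = q+2) ∨ (a = 5 ∧ v = q+3)
      ∨ ((6 ≤ a ∧ a ≤ q+5) ∧ v = a-5) ∨ (q+6 ≤ a ∧ v = a-(q+5))) :
    (N3 q).src a = v := by
  rw [N3_src]; unfold src3; split_ifs <;> omega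

lemma tgt3_val (hq : 1 ≤ q) (a v : ℕ)
    (h : (a = 0 ∧ v = q+1) ∨ (a = 1 ∧ v = 1) ∨ ((2 ≤ a ∧ a ≤ 3) ∧ v = q+2) ∨ (a = 4 ∧ v = q+3)
      ∨ (a = 5 ∧ v = q+4) ∨ (a = q+5 ∧ v = q+3) ∨ ((6 ≤ a ∧ a ≤ q+4 ∧ a ≠ q+5) ∧ v = a-4)
      ∨ (q+6 ≤ a ∧ v = a-1)) :
    (N3 q).tgt a = v := by
  rw [N3_tgt]; unfold tgt3; split_ifs <;> omega

lemma p3_h2_uniq : ∀ c ∈ (N3 q).arcs, (N3 q).src c = q+3 → c = 5 := by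
  intro c hc hsc
  rw [N3_arcs] at hc
  rw [N3_src] at hsc
  unfold src3 at hsc
  split_ifs at hsc <;> omega

lemma p3_h1_uniq : ∀ c ∈ (N3 q).arcs, (N3 q).src c = q+2 → c = 4 := by
  intro c hc hsc
  rw [N3_arcs] at hc
  rw [N3_src] at hsc
  unfold src3 at hsc
  split_ifs at hsc <;> omega

lemma p3_u_uniq (hq : 1 ≤ q) : ∀ c ∈ (N3 q).arcs, (N3 q).src c = q+1 → c = 2 ∨ c = 3 := by
  intro c hc hsc
  rw [N3_arcs] at hc
  rw [N3_src] at hsc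
  unfold src3 at hsc
  split_ifs at hsc <;> omega

lemma p3_chain_uniq (hq : 1 ≤ q) {i : ℕ} (h1 : 1 ≤ i) (h2 : i ≤ q) :
    ∀ c ∈ (N3 q).arcs, (N3 q).src c = i → c = i+5 ∨ c = q+5+i := by
  intro c hc hsc
  rw [N3_arcs] at hc
  rw [N3_src] at hsc
  unfold src3 at hsc
  split_ifs at hsc <;> omega

lemma p3_root_uniq : ∀ c ∈ (N3 q).arcs, (N3 q).src c = 0 → c = 0 ∨ c = 1 := by
  intro c hc hsc
  rw [N3_arcs] at hc
  rw [N3_src] at hsc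
  unfold src3 at hsc
  split_ifs at hsc <;> omega

lemma p3_h2_x1 (hq : 1 ≤ q) : nPaths (N3 q) (q+3) (q+4) = 1 := by
  rw [nPaths_one (by omega) 5 ((N3_arcs q 5).mpr (by omega))
    (src3_val hq 5 (q+3) (by omega)) (fun b hb hsb => p3_h2_uniq b hb hsb),
    tgt3_val hq 5 (q+4) (by omega)]
  exact nPaths_self (mono3 hq) ((N3_verts q _).mpr (by omega))

lemma p3_gadget_x1 (hq : 1 ≤ q) : nPaths (N3 q) (q+1) (q+4) = 2 := by
  have h2 : nPaths (N3 q) (q+2) (q+4) = 1 := by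
    rw [nPaths_one (by omega) 4 ((N3_arcs q 4).mpr (by omega))
      (src3_val hq 4 (q+2) (by omega)) (fun b hb hsb => p3_h1_uniq b hb hsb),
      tgt3_val hq 4 (q+3) (by omega)]
    exact p3_h2_x1 hq
  rw [nPaths_two (mono3 hq) (by omega) 2 3 ((N3_arcs q 2).mpr (by omega))
    ((N3_arcs q 3).mpr (by omega))
    (src3_val hq 2 (q+1) (by omega)) (src3_val hq 3 (q+1) (by omega)) (by omega)
    (p3_u_uniq hq),
    tgt3_val hq 2 (q+2) (by omega), tgt3_val hq 3 (q+2) (by omega), h2]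

lemma p3_x1_chain (hq : 1 ≤ q) : ∀ d i, 1 ≤ i → i + d = q → nPaths (N3 q) i (q+4) = 1 := by
  intro d
  induction d with
  | zero =>
    intro i h1 hi
    rw [show i = q by omega]
    rw [nPaths_two (mono3 hq) (by omega) (q+5) (q+5+q) ((N3_arcs q _).mpr (by omega))
      ((N3_arcs q _).mpr (by omega))
      (src3_val hq (q+5) q (by omega)) (src3_val hq (q+5+q) q (by omega)) (by omega)
      (p3_chain_uniq hq (by omega) (by omega)),
      tgt3_val hq (q+5) (q+3) (by omega), tgt3_val hq (q+5+q) (q+4+q) (by omega),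
      p3_h2_x1 hq, dead3 hq (show q+4 ≤ q+4+q by omega) (by omega)]
  | succ d ih =>
    intro i h1 hi
    rw [nPaths_two (mono3 hq) (by omega) (i+5) (q+5+i) ((N3_arcs q _).mpr (by omega))
      ((N3_arcs q _).mpr (by omega))
      (src3_val hq (i+5) i (by omega)) (src3_val hq (q+5+i) i (by omega)) (by omega)
      (p3_chain_uniq hq (by omega) (by omega)),
      tgt3_val hq (i+5) (i+1) (by omega), tgt3_val hq (q+5+i) (q+4+i) (by omega),
      ih (i+1) (by omega) (by omega), dead3 hq (show q+4 ≤ q+4+i by omega) (by omega)]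

lemma p3_x1 (hq : 1 ≤ q) : nPaths (N3 q) 0 (q+4) = 3 := by
  rw [nPaths_two (mono3 hq) (by omega) 0 1 ((N3_arcs q 0).mpr (by omega))
    ((N3_arcs q 1).mpr (by omega))
    (src3_val hq 0 0 (by omega)) (src3_val hq 1 0 (by omega)) (by omega)
    p3_root_uniq,
    tgt3_val hq 0 (q+1) (by omega), tgt3_val hq 1 1 (by omega),
    p3_gadget_x1 hq, p3_x1_chain hq (q-1) 1 (by omega) (by omega)]

lemma p3_h2_leaf (hq : 1 ≤ q) {j : ℕ} (h1 : 1 ≤ j) (h2 : j ≤ q) :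
    nPaths (N3 q) (q+3) (q+4+j) = 0 := by
  rw [nPaths_one (by omega) 5 ((N3_arcs q 5).mpr (by omega))
    (src3_val hq 5 (q+3) (by omega)) (fun b hb hsb => p3_h2_uniq b hb hsb),
    tgt3_val hq 5 (q+4) (by omega)]
  exact dead3 hq (by omega) (by omega)

lemma p3_gadget_leaf (hq : 1 ≤ q) {j : ℕ} (h1 : 1 ≤ j) (h2 : j ≤ q) :
    nPaths (N3 q) (q+1) (q+4+j) = 0 := by
  have h3 : nPaths (N3 q) (q+2) (q+4+j) = 0 := by
    rw [nPaths_one (by omega) 4 ((N3_arcs q 4).mpr (by omega))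
      (src3_val hq 4 (q+2) (by omega)) (fun b hb hsb => p3_h1_uniq b hb hsb),
      tgt3_val hq 4 (q+3) (by omega)]
    exact p3_h2_leaf hq h1 h2
  rw [nPaths_two (mono3 hq) (by omega) 2 3 ((N3_arcs q 2).mpr (by omega))
    ((N3_arcs q 3).mpr (by omega))
    (src3_val hq 2 (q+1) (by omega)) (src3_val hq 3 (q+1) (by omega)) (by omega)
    (p3_u_uniq hq),
    tgt3_val hq 2 (q+2) (by omega), tgt3_val hq 3 (q+2) (by omega), h3]

lemma p3_zero (hq : 1 ≤ q) {j : ℕ} (h1 : 1 ≤ j) (h2 : j ≤ q) :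
    ∀ d i, j < i → i ≤ q → i + d = q → nPaths (N3 q) i (q+4+j) = 0 := by
  intro d
  induction d with
  | zero =>
    intro i hj1 hj2 hi
    rw [show i = q by omega]
    rw [nPaths_two (mono3 hq) (by omega) (q+5) (q+5+q) ((N3_arcs q _).mpr (by omega))
      ((N3_arcs q _).mpr (by omega))
      (src3_val hq (q+5) q (by omega)) (src3_val hq (q+5+q) q (by omega)) (by omega)
      (p3_chain_uniq hq (by omega) (by omega)),
      tgt3_val hq (q+5) (q+3) (by omega), tgt3_val hq (q+5+q) (q+4+q) (by omega),
      p3_h2_leaf hq h1 h2, dead3 hq (show q+4 ≤ q+4+q by omega) (by omega)]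
  | succ d ih =>
    intro i hj1 hj2 hi
    rw [nPaths_two (mono3 hq) (by omega) (i+5) (q+5+i) ((N3_arcs q _).mpr (by omega))
      ((N3_arcs q _).mpr (by omega))
      (src3_val hq (i+5) i (by omega)) (src3_val hq (q+5+i) i (by omega)) (by omega)
      (p3_chain_uniq hq (by omega) (by omega)),
      tgt3_val hq (i+5) (i+1) (by omega), tgt3_val hq (q+5+i) (q+4+i) (by omega),
      ih (i+1) (by omega) (by omega) (by omega),
      dead3 hq (show q+4 ≤ q+4+i by omega) (by omega)]

lemma p3_one (hq : 1 ≤ q) {j : ℕ} (h1 : 1 ≤ j) (h2 : j ≤ q) :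
    ∀ d i, 1 ≤ i → i ≤ j → i + d = j → nPaths (N3 q) i (q+4+j) = 1 := by
  intro d
  induction d with
  | zero =>
    intro i hi1 hi2 hi
    rw [show i = j by omega]
    by_cases hjq : j = q
    · rw [nPaths_two (mono3 hq) (by omega) (j+5) (q+5+j) ((N3_arcs q _).mpr (by omega))
        ((N3_arcs q _).mpr (by omega))
        (src3_val hq (j+5) j (by omega)) (src3_val hq (q+5+j) j (by omega)) (by omega)
        (p3_chain_uniq hq (by omega) (by omega)),
        tgt3_val hq (j+5) (q+3) (by omega), tgt3_val hq (q+5+j) (q+4+j) (by omega),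
        p3_h2_leaf hq h1 h2, nPaths_self (mono3 hq) ((N3_verts q _).mpr (by omega))]
    · rw [nPaths_two (mono3 hq) (by omega) (j+5) (q+5+j) ((N3_arcs q _).mpr (by omega))
        ((N3_arcs q _).mpr (by omega))
        (src3_val hq (j+5) j (by omega)) (src3_val hq (q+5+j) j (by omega)) (by omega)
        (p3_chain_uniq hq (by omega) (by omega)),
        tgt3_val hq (j+5) (j+1) (by omega), tgt3_val hq (q+5+j) (q+4+j) (by omega),
        p3_zero hq h1 h2 (q-(j+1)) (j+1) (by omega) (by omega) (by omega),
        nPaths_self (mono3 hq) ((N3_verts q _).mpr (by omega))]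
  | succ d ih =>
    intro i hi1 hi2 hi
    rw [nPaths_two (mono3 hq) (by omega) (i+5) (q+5+i) ((N3_arcs q _).mpr (by omega))
      ((N3_arcs q _).mpr (by omega))
      (src3_val hq (i+5) i (by omega)) (src3_val hq (q+5+i) i (by omega)) (by omega)
      (p3_chain_uniq hq (by omega) (by omega)),
      tgt3_val hq (i+5) (i+1) (by omega), tgt3_val hq (q+5+i) (q+4+i) (by omega),
      ih (i+1) (by omega) (by omega) (by omega),
      dead3 hq (show q+4 ≤ q+4+i by omega) (by omega)]

lemma p3_leaf (hq : 1 ≤ q) {j : ℕ} (h1 : 1 ≤ j) (h2 : j ≤ q) :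
    nPaths (N3 q) 0 (q+4+j) = 1 := by
  rw [nPaths_two (mono3 hq) (by omega) 0 1 ((N3_arcs q 0).mpr (by omega))
    ((N3_arcs q 1).mpr (by omega))
    (src3_val hq 0 0 (by omega)) (src3_val hq 1 0 (by omega)) (by omega)
    p3_root_uniq,
    tgt3_val hq 0 (q+1) (by omega), tgt3_val hq 1 1 (by omega),
    p3_gadget_leaf hq h1 h2, p3_one hq h1 h2 (j-1) 1 (by omega) (by omega) (by omega)]

lemma retic3_h2 (hq : 1 ≤ q) : IsReticN (N3 q) (q+3) :=
  ⟨(N3_verts q _).mpr (by omega), inDeg3_h2 hq, outDeg3_h2 hq⟩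

set_option maxHeartbeats 1600000 in
lemma t3_mono (hq : 1 ≤ q) (a : ℕ) (ha : a < 2*q+6) (hb : a ≠ q+5) :
    t3n q ((N3 q).src a) < t3n q ((N3 q).tgt a) := by
  rcases (by omega : a = 0 ∨ a = 1 ∨ (2 ≤ a ∧ a ≤ 3) ∨ a = 4 ∨ a = 5 ∨ (6 ≤ a ∧ a ≤ q+4)
      ∨ q+6 ≤ a) with rfl | rfl | h | rfl | rfl | h | h
  · rw [src3_val hq 0 0 (by omega), tgt3_val hq 0 (q+1) (by omega)]
    unfold t3n; split_ifs <;> first | exact (False.elim (by assumption)) | omega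
  · rw [src3_val hq 1 0 (by omega), tgt3_val hq 1 1 (by omega)]
    unfold t3n; split_ifs <;> first | exact (False.elim (by assumption)) | omega
  · rw [src3_val hq a (q+1) (by omega), tgt3_val hq a (q+2) (by omega)]
    unfold t3n; split_ifs <;> first | exact (False.elim (by assumption)) | omega
  · rw [src3_val hq 4 (q+2) (by omega), tgt3_val hq 4 (q+3) (by omega)]
    unfold t3n; split_ifs <;> first | exact (False.elim (by assumption)) | omega
  · rw [src3_val hq 5 (q+3) (by omega), tgt3_val hq 5 (q+4) (by omega)]
    unfold t3n; split_ifs <;> first | exact (False.elim (by assumption)) | omega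
  · rw [src3_val hq a (a-5) (by omega), tgt3_val hq a (a-4) (by omega)]
    unfold t3n; split_ifs <;> first | exact (False.elim (by assumption)) | omega
  · rw [src3_val hq a (a-(q+5)) (by omega), tgt3_val hq a (a-1) (by omega)]
    unfold t3n; split_ifs <;> first | exact (False.elim (by assumption)) | omega

set_option maxHeartbeats 1600000 in
lemma hgt3 (hq : 1 ≤ q) : IsHGT (N3 q) (fun v => (t3n q v : ℝ)) := by
  refine ⟨fun v _ => Nat.cast_nonneg _, ?_, ?_, ?_⟩
  · intro a ha
    rw [N3_arcs] at ha
    by_cases hb : a = q+5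
    · subst hb
      rw [src3_val hq (q+5) q (by omega), tgt3_val hq (q+5) (q+3) (by omega)]
      have he : t3n q q = t3n q (q+3) := by unfold t3n; split_ifs <;> first | exact (False.elim (by assumption)) | omega
      refine ⟨fun _ => ?_, fun hn => absurd (retic3_h2 hq) hn⟩
      show ((t3n q q : ℕ) : ℝ) ≤ ((t3n q (q+3) : ℕ) : ℝ)
      rw [he]
    · have hlt := t3_mono hq a ha hb
      exact ⟨fun _ => le_of_lt (by simp only [Nat.cast_lt]; exact hlt),
        fun _ => by simp only [Nat.cast_lt]; exact hlt⟩
  · intro u hu hleaf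
    rw [N3_verts] at hu
    have hu2 : u < q+4 := by
      by_contra h
      exact hleaf (leaf3 hq (by omega) hu)
    have key : ∀ b w, b ∈ (N3 q).arcs → (N3 q).src b = u → (N3 q).tgt b = w →
        t3n q u < t3n q w →
        ∃ v, IsParent (N3 q) u v ∧ (fun v => (t3n q v : ℝ)) u < (fun v => (t3n q v : ℝ)) v := by
      intro b w hb hsb htb hlt
      exact ⟨w, ⟨b, hb, hsb, htb⟩, by simp only [Nat.cast_lt]; exact hlt⟩
    rcases (by omega : u = 0 ∨ (1 ≤ u ∧ u ≤ q) ∨ u = q+1 ∨ u = q+2 ∨ u = q+3)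
      with rfl | h | rfl | rfl | rfl
    · exact key 1 1 ((N3_arcs q 1).mpr (by omega)) (src3_val hq 1 0 (by omega))
        (tgt3_val hq 1 1 (by omega)) (by unfold t3n; split_ifs <;> first | exact (False.elim (by assumption)) | omega)
    · exact key (q+5+u) (q+4+u) ((N3_arcs q _).mpr (by omega))
        (src3_val hq (q+5+u) u (by omega)) (tgt3_val hq (q+5+u) (q+4+u) (by omega))
        (by unfold t3n; split_ifs <;> first | exact (False.elim (by assumption)) | omega)
    · exact key 2 (q+2) ((N3_arcs q 2).mpr (by omega)) (src3_val hq 2 (q+1) (by omega))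
        (tgt3_val hq 2 (q+2) (by omega)) (by unfold t3n; split_ifs <;> first | exact (False.elim (by assumption)) | omega)
    · exact key 4 (q+3) ((N3_arcs q 4).mpr (by omega)) (src3_val hq 4 (q+2) (by omega))
        (tgt3_val hq 4 (q+3) (by omega)) (by unfold t3n; split_ifs <;> first | exact (False.elim (by assumption)) | omega)
    · exact key 5 (q+4) ((N3_arcs q 5).mpr (by omega)) (src3_val hq 5 (q+3) (by omega))
        (tgt3_val hq 5 (q+4) (by omega)) (by unfold t3n; split_ifs <;> first | exact (False.elim (by assumption)) | omega)
  · intro v hret hbead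
    rcases retic3 hq hret with rfl | rfl
    · exfalso
      apply hbead
      refine ⟨2, 3, (N3_arcs q 2).mpr (by omega), (N3_arcs q 3).mpr (by omega), by omega,
        ?_, ?_, ?_⟩
      · rw [src3_val hq 2 (q+1) (by omega), src3_val hq 3 (q+1) (by omega)]
      · rw [tgt3_val hq 2 (q+2) (by omega), tgt3_val hq 3 (q+2) (by omega)]
      · right
        rw [tgt3_val hq 2 (q+2) (by omega)]
    · have he : t3n q q = t3n q (q+3) := by unfold t3n; split_ifs <;> first | exact (False.elim (by assumption)) | omega
      refine ⟨q, ⟨⟨q+5, (N3_arcs q _).mpr (by omega), src3_val hq (q+5) q (by omega),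
        tgt3_val hq (q+5) (q+3) (by omega)⟩, ?_⟩, ?_⟩
      · show ((t3n q q : ℕ) : ℝ) = ((t3n q (q+3) : ℕ) : ℝ)
        rw [he]
      · rintro u' ⟨⟨a, ha, hsa, hta⟩, hteq⟩
        rw [N3_arcs] at ha
        have haa : a = 4 ∨ a = q+5 := by
          rw [N3_tgt] at hta
          unfold tgt3 at hta
          split_ifs at hta <;> omega
        rcases haa with rfl | rfl
        · exfalso
          rw [← hsa, src3_val hq 4 (q+2) (by omega)] at hteq
          simp only [Nat.cast_inj] at hteq
          unfold t3n at hteq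
          split_ifs at hteq <;> first | exact (False.elim (by assumption)) | omega
        · rw [← hsa, src3_val hq (q+5) q (by omega)]

end N3deg

lemma realize3 (q : ℕ) (hq : 1 ≤ q) :
    ∃ (R : LNet) (t : ℕ → ℝ), RealizesL R (3 :: List.replicate q 1) ∧ IsHGT R.net t := by
  refine ⟨⟨N3 q, fun i => if i = 0 then q+4 else q+4+i⟩, fun v => (t3n q v : ℝ),
    ⟨phylo3 hq, ?_, ?_, ?_, ?_⟩, hgt3 hq⟩
  · intro i hi
    have hi' : i < q+1 := by simpa using hi
    dsimp only
    split_ifs with h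
    · exact leaf3 hq (by omega) (by omega)
    · exact leaf3 hq (by omega) (by omega)
  · intro i j hi hj hij
    dsimp only at hij
    split_ifs at hij <;> omega
  · intro v hv
    have hb := leaf3' hq hv
    by_cases h : v = q+4
    · exact ⟨0, by simp, by simp [h]⟩
    · refine ⟨v - (q+4), by simp; omega, ?_⟩
      dsimp only
      rw [if_neg (by omega)]
      omega
  · intro i hi r hr
    rw [root3 hq hr]
    have hi' : i < q+1 := by simpa using hi
    by_cases h : i = 0
    · subst h
      dsimp only
      rw [if_pos rfl, p3_x1 hq]
      rfl
    · dsimp only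
      rw [if_neg h, p3_leaf hq (show 1 ≤ i by omega) (by omega)]
      obtain ⟨k, rfl⟩ : ∃ k, i = k+1 := ⟨i-1, by omega⟩
      rw [List.getD_cons_succ, getD_replicate_one q k (by omega)]


/-- If `m = (n, n-1, …, 1)` with `n ≥ 3`, then for any ploidy
profile `m'` obtained from `m` by removing at most one of its components there is
a core network for `m'` admitting an HGT-consistent labelling. -/
theorem staircase_core_network_hgt (n : ℕ) (hn : 3 ≤ n) (m' : List ℕ)
    (hm' : m' = (List.range n).reverse.map (· + 1) ∨
      ∃ i < n, m' = ((List.range n).reverse.map (· + 1)).eraseIdx i) :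
    ∃ (mt : List ℕ) (R : LNet) (t : ℕ → ℝ),
      IsTerminal m' mt ∧ RealizesL R mt ∧ IsHGT R.net t := by
  obtain ⟨h, q, hh, hq, hterm⟩ := terminal_cases n hn m' hm'
  rcases hh with rfl | rfl
  · obtain ⟨R, t, hR, hT⟩ := realize2 q hq
    exact ⟨2 :: List.replicate q 1, R, t, hterm, hR, hT⟩
  · obtain ⟨R, t, hR, hT⟩ := realize3 q hq
    exact ⟨3 :: List.replicate q 1, R, t, hterm, hR, hT⟩

end Ploidy
end

section
/- For every ploidy profile m = (m_1, ..., m_n) with m_1 >= 2, the simplification process terminates after finitely many steps; that is, the simplification sequence sigma(m) is a finite sequence of ploidy profiles whose last element is a simple ploidy profile. -/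
/-!
Formalization preamble for "Autopolyploidy, allopolyploidy, and phylogenetic
networks with horizontal arcs" (Huber & Maher).

Networks are finite directed multigraphs whose vertices and arcs are (finitely
many) natural numbers; parallel arcs (beads) are allowed, loops are not.
-/

namespace Ploidy

lemma insertDesc_sum (x : ℕ) (l : List ℕ) : (insertDesc x l).sum = x + l.sum := by
  induction l with
  | nil => simp [insertDesc]
  | cons y ys ih =>
    simp only [insertDesc]
    split
    · simp [ih]; omega
    · simp

lemma insertDesc_mem (x y : ℕ) (l : List ℕ) : y ∈ insertDesc x l ↔ y = x ∨ y ∈ l := by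
  induction l with
  | nil => simp [insertDesc]
  | cons z zs ih =>
    simp only [insertDesc]
    split
    · simp [ih]; tauto
    · simp

lemma insertDesc_sorted {x : ℕ} {l : List ℕ} (h : l.Pairwise (· ≥ ·)) :
    (insertDesc x l).Pairwise (· ≥ ·) := by
  induction l with
  | nil => simp [insertDesc]
  | cons y ys ih =>
    rw [List.pairwise_cons] at h
    simp only [insertDesc]
    split
    · rename_i hxy
      rw [List.pairwise_cons]
      refine ⟨fun b hb => ?_, ih h.2⟩
      rcases (insertDesc_mem x b ys).mp hb with rfl | hb
      · exact hxy
      · exact h.1 b hb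
    · rename_i hxy
      rw [List.pairwise_cons]
      refine ⟨fun b hb => ?_, List.pairwise_cons.mpr h⟩
      simp only [List.mem_cons] at hb
      rcases hb with rfl | hb
      · omega
      · exact le_trans (h.1 b hb) (by omega)

lemma simpStep_decreases {l : List ℕ} (hP : IsProfileL l) (h2 : 2 ≤ l.headI)
    (hns : ¬ ∀ x ∈ l.tail, x = 1) :
    IsProfileL (simpStep l) ∧ 2 ≤ (simpStep l).headI ∧ (simpStep l).sum < l.sum := by
  obtain ⟨hne, hsort, hpos⟩ := hP
  match l with
  | [] => exact absurd rfl hne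
  | [m1] => exact absurd (by simp) hns
  | m1 :: m2 :: rest =>
    have hcond : ¬ (2 ≤ (m1 :: m2 :: rest).headI ∧
        ∀ x ∈ (m1 :: m2 :: rest).tail, x = 1) := by
      intro hc; exact hns hc.2
    rw [List.pairwise_cons] at hsort
    have hsort2 := hsort.2
    rw [List.pairwise_cons] at hsort2
    have hm12 : m2 ≤ m1 := hsort.1 m2 (by simp)
    have hm2 : 2 ≤ m2 := by
      push_neg at hns
      obtain ⟨x, hx, hx1⟩ := hns
      simp only [List.tail_cons, List.mem_cons] at hx
      have hx2 : 1 ≤ x := hpos x (by simp [hx])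
      rcases hx with rfl | hx
      · omega
      · have := hsort2.1 x hx
        omega
    have h2' : 2 ≤ m1 := by simpa using h2
    rw [simpStep, if_neg hcond]
    by_cases he : m1 = m2
    · rw [if_pos he]
      subst he
      refine ⟨⟨by simp, List.pairwise_cons.mpr hsort2, fun x hx => hpos x (List.mem_cons_of_mem _ hx)⟩, by simpa using h2', by simp; omega⟩
    · rw [if_neg he]
      by_cases hb : m2 < m1 - m2
      · rw [if_pos hb]
        refine ⟨⟨by simp, ?_, ?_⟩, by simp; omega, by simp; omega⟩
        · rw [List.pairwise_cons]
          refine ⟨fun b hb' => ?_, List.pairwise_cons.mpr hsort2⟩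
          simp only [List.mem_cons] at hb'
          rcases hb' with rfl | hb'
          · omega
          · have := hsort2.1 b hb'; omega
        · intro x hx
          simp only [List.mem_cons] at hx
          rcases hx with rfl | hx
          · omega
          · exact hpos x (by simp [hx])
      · rw [if_neg hb]
        have halpha : 0 < m1 - m2 := by omega
        have hle : m1 - m2 ≤ m2 := by omega
        have hidres : insertDesc (m1 - m2) (m2 :: rest) =
            m2 :: insertDesc (m1 - m2) rest := by
          simp [insertDesc, hle]
        refine ⟨⟨by rw [hidres]; simp, insertDesc_sorted (List.pairwise_cons.mpr hsort2), ?_⟩, by rw [hidres]; simpa, ?_⟩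
        · intro x hx
          rcases (insertDesc_mem _ x _).mp hx with rfl | hx
          · omega
          · exact hpos x (by simp [List.mem_cons] at hx ⊢; tauto)
        · rw [insertDesc_sum]
          simp only [List.sum_cons]
          omega

/-- For every ploidy profile `m` with `m₁ ≥ 2` the
simplification process terminates: after finitely many simplification steps a
simple ploidy profile is reached. -/
theorem simplification_terminates (m : List ℕ) (hm : IsProfileL m)
    (h2 : 2 ≤ m.headI) :
    ∃ N : ℕ, IsSimpleP (simpStep^[N] m) := by
  suffices H : ∀ n (l : List ℕ), l.sum ≤ n → IsProfileL l → 2 ≤ l.headI →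
      ∃ N, IsSimpleP (simpStep^[N] l) from H m.sum m le_rfl hm h2
  intro n
  induction n with
  | zero =>
    intro l hsum hP h2
    match l with
    | [] => exact absurd rfl hP.1
    | a :: t => simp at hsum h2; omega
  | succ n ih =>
    intro l hsum hP h2
    by_cases hs : ∀ x ∈ l.tail, x = 1
    · exact ⟨0, hP.1, h2, hs⟩
    · obtain ⟨hP', h2', hlt⟩ := simpStep_decreases hP h2 hs
      obtain ⟨N, hN⟩ := ih (simpStep l) (by omega) hP' h2'
      exact ⟨N + 1, by rwa [Function.iterate_succ_apply]⟩

end Ploidy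
end
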